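/- arXiv:2312.08941 — 4 statements merged into one kernel-verified Lean document; each statement's English description precedes it below -/
import Mathlib

section
/- Let φ : ℝⁿ×(0,∞) → (0,∞) satisfy the doubling condition (there is C > 0 with C⁻¹ ≤ φ(x,r)/φ(x,s) ≤ C whenever 1/2 ≤ r/s ≤ 2) and the integral condition ∫_r^∞ φ(x,t)/t dt ≤ C φ(x,r) for all x ∈ ℝⁿ and r > 0. Then for every p ∈ (0,∞) there is a constant C_p such that for all x ∈ ℝⁿ and r > 0: ∫_r^∞ φ(x,t)^{1/p}/t dt ≤ C_p φ(x,r)^{1/p}. -/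
open MeasureTheory Metric ENNReal

/-- if `φ` is doubling and satisfies `∫_r^∞ φ(x,t)/t dt ≤ C φ(x,r)`,
then for every `p ∈ (0,∞)` there is `C_p` with
`∫_r^∞ φ(x,t)^{1/p}/t dt ≤ C_p φ(x,r)^{1/p}`. -/
theorem integral_rpow_le_of_doubling_of_integral_le
    (n : ℕ) (φ : EuclideanSpace ℝ (Fin n) → ℝ → ℝ)
    (hφpos : ∀ x r, 0 < r → 0 < φ x r)
    (C : ℝ) (hC : 0 < C)
    (hdoub : ∀ x (r s : ℝ), 0 < r → 0 < s → 1 / 2 ≤ r / s → r / s ≤ 2 →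
      C⁻¹ ≤ φ x r / φ x s ∧ φ x r / φ x s ≤ C)
    (hint : ∀ x (r : ℝ), 0 < r →
      ∫⁻ t in Set.Ioi r, ENNReal.ofReal (φ x t / t) ≤ ENNReal.ofReal (C * φ x r)) :
    ∀ p : ℝ, 0 < p → ∃ Cp : ℝ, 0 < Cp ∧ ∀ x (r : ℝ), 0 < r →
      ∫⁻ t in Set.Ioi r, ENNReal.ofReal (φ x t ^ (1 / p) / t)
        ≤ ENNReal.ofReal (Cp * φ x r ^ (1 / p)) := by
  intro p hp
  have hC2 : (0:ℝ) < 2 * C ^ 2 := by positivity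
  set ε : ℝ := (2 * C ^ 2)⁻¹ with hεdef
  have hε : 0 < ε := by positivity
  set θ : ℝ := (1 + ε)⁻¹ with hθdef
  have hθpos : 0 < θ := by positivity
  have hθlt1 : θ < 1 := by
    rw [hθdef]
    exact inv_lt_one_of_one_lt₀ (by linarith)
  set A' : ℝ := 2 * C ^ 2 + 1 with hA'def
  have hA'pos : 0 < A' := by positivity
  have hA'1 : (1:ℝ) ≤ A' := by nlinarith
  have hAθ : A' * θ = 2 * C ^ 2 := by
    rw [hA'def, hθdef, hεdef]
    field_simp
  -- lower bound on one dyadic block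
  have fact1 : ∀ x (s : ℝ), 0 < s →
      ENNReal.ofReal (C⁻¹ * φ x (2*s) / 2)
        ≤ ∫⁻ t in Set.Ioc s (2*s), ENNReal.ofReal (φ x t / t) := by
    intro x s hs
    have h2s : 0 < 2*s := by linarith
    have hconst : ∀ t ∈ Set.Ioc s (2*s),
        ENNReal.ofReal (C⁻¹ * φ x (2*s) / (2*s)) ≤ ENNReal.ofReal (φ x t / t) := by
      intro t ht
      obtain ⟨ht1, ht2⟩ := ht
      have htpos : 0 < t := lt_trans hs ht1
      apply ENNReal.ofReal_le_ofReal
      have hd := (hdoub x t (2*s) htpos h2s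
        (by rw [le_div_iff₀ h2s]; linarith) (by rw [div_le_iff₀ h2s]; linarith)).1
      have hφt : C⁻¹ * φ x (2*s) ≤ φ x t := by
        rw [le_div_iff₀ (hφpos x (2*s) h2s)] at hd; linarith
      exact div_le_div₀ (le_of_lt (hφpos x t htpos)) hφt htpos ht2
    calc ENNReal.ofReal (C⁻¹ * φ x (2*s) / 2)
        = ENNReal.ofReal (C⁻¹ * φ x (2*s) / (2*s)) * volume (Set.Ioc s (2*s)) := by
          rw [Real.volume_Ioc, ← ENNReal.ofReal_mul
            (div_nonneg (mul_nonneg (inv_nonneg.2 hC.le) (hφpos x (2*s) h2s).le) h2s.le)]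
          congr 1
          field_simp
          ring
      _ = ∫⁻ _ in Set.Ioc s (2*s), ENNReal.ofReal (C⁻¹ * φ x (2*s) / (2*s)) :=
          (setLIntegral_const _ _).symm
      _ ≤ ∫⁻ t in Set.Ioc s (2*s), ENNReal.ofReal (φ x t / t) :=
          setLIntegral_mono' measurableSet_Ioc hconst
  -- splitting
  have hsplit : ∀ x (s : ℝ), 0 < s →
      ∫⁻ t in Set.Ioi s, ENNReal.ofReal (φ x t / t)
        = (∫⁻ t in Set.Ioc s (2*s), ENNReal.ofReal (φ x t / t))
          + ∫⁻ t in Set.Ioi (2*s), ENNReal.ofReal (φ x t / t) := by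
    intro x s hs
    rw [← lintegral_union measurableSet_Ioi (Set.Ioc_disjoint_Ioi le_rfl),
      Set.Ioc_union_Ioi_eq_Ioi (by linarith)]
  -- key contraction step
  have key : ∀ x (s : ℝ), 0 < s →
      ∫⁻ t in Set.Ioi (2*s), ENNReal.ofReal (φ x t / t)
        ≤ ENNReal.ofReal θ * ∫⁻ t in Set.Ioi s, ENNReal.ofReal (φ x t / t) := by
    intro x s hs
    have h2s : 0 < 2*s := by linarith
    set I2 := ∫⁻ t in Set.Ioi (2*s), ENNReal.ofReal (φ x t / t) with hI2
    have hεI : ENNReal.ofReal ε * I2 ≤ ENNReal.ofReal (C⁻¹ * φ x (2*s) / 2) := by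
      calc ENNReal.ofReal ε * I2
          ≤ ENNReal.ofReal ε * ENNReal.ofReal (C * φ x (2*s)) := by
            gcongr
            exact hint x (2*s) h2s
        _ = ENNReal.ofReal (ε * (C * φ x (2*s))) := (ENNReal.ofReal_mul hε.le).symm
        _ = ENNReal.ofReal (C⁻¹ * φ x (2*s) / 2) := by
            congr 1
            rw [hεdef]
            field_simp
    have hstep : ENNReal.ofReal (1 + ε) * I2
        ≤ ∫⁻ t in Set.Ioi s, ENNReal.ofReal (φ x t / t) := by
      rw [hsplit x s hs]
      have he : ENNReal.ofReal (1+ε) * I2 = ENNReal.ofReal ε * I2 + I2 := by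
        rw [ENNReal.ofReal_add one_pos.le hε.le, add_mul, ENNReal.ofReal_one, one_mul, add_comm]
      rw [he]
      exact add_le_add_left (hεI.trans (fact1 x s hs)) I2
    have h1ε : (0:ℝ) < 1 + ε := by linarith
    have hne : ENNReal.ofReal (1+ε) ≠ 0 := by
      simp only [ne_eq, ENNReal.ofReal_eq_zero, not_le]; linarith
    calc I2 = (ENNReal.ofReal (1+ε))⁻¹ * (ENNReal.ofReal (1+ε) * I2) := by
          rw [← mul_assoc, ENNReal.inv_mul_cancel hne ENNReal.ofReal_ne_top, one_mul]
      _ ≤ (ENNReal.ofReal (1+ε))⁻¹ * ∫⁻ t in Set.Ioi s, ENNReal.ofReal (φ x t / t) := by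
          gcongr
      _ = ENNReal.ofReal θ * ∫⁻ t in Set.Ioi s, ENNReal.ofReal (φ x t / t) := by
          rw [hθdef, ENNReal.ofReal_inv_of_pos h1ε]
  -- iteration
  have hiter : ∀ x (s : ℝ), 0 < s → ∀ k : ℕ,
      ∫⁻ t in Set.Ioi ((2:ℝ)^k * s), ENNReal.ofReal (φ x t / t)
        ≤ (ENNReal.ofReal θ)^k * ∫⁻ t in Set.Ioi s, ENNReal.ofReal (φ x t / t) := by
    intro x s hs k
    induction k with
    | zero => simp
    | succ k ih =>
      have h2 : (2:ℝ)^(k+1) * s = 2 * ((2:ℝ)^k * s) := by ring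
      rw [h2]
      calc ∫⁻ t in Set.Ioi (2 * ((2:ℝ)^k * s)), ENNReal.ofReal (φ x t / t)
          ≤ ENNReal.ofReal θ * ∫⁻ t in Set.Ioi ((2:ℝ)^k * s), ENNReal.ofReal (φ x t / t) :=
            key x ((2:ℝ)^k * s) (by positivity)
        _ ≤ ENNReal.ofReal θ * ((ENNReal.ofReal θ)^k
              * ∫⁻ t in Set.Ioi s, ENNReal.ofReal (φ x t / t)) := by gcongr
        _ = (ENNReal.ofReal θ)^(k+1) * ∫⁻ t in Set.Ioi s, ENNReal.ofReal (φ x t / t) := by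
            ring
  -- geometric decay of φ
  have hdecay : ∀ x (r : ℝ), 0 < r → ∀ k : ℕ, φ x ((2:ℝ)^k * r) ≤ A' * θ^k * φ x r := by
    intro x r hr k
    cases k with
    | zero =>
      simp only [pow_zero, one_mul]
      nlinarith [hφpos x r hr]
    | succ k =>
      have hs : (0:ℝ) < (2:ℝ)^k * r := by positivity
      have h2 : (2:ℝ)^(k+1) * r = 2 * ((2:ℝ)^k * r) := by ring
      have hE : ENNReal.ofReal (C⁻¹ * φ x (2*((2:ℝ)^k*r)) / 2)
          ≤ ENNReal.ofReal (θ^k * (C * φ x r)) := by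
        calc ENNReal.ofReal (C⁻¹ * φ x (2*((2:ℝ)^k*r)) / 2)
            ≤ ∫⁻ t in Set.Ioc ((2:ℝ)^k*r) (2*((2:ℝ)^k*r)), ENNReal.ofReal (φ x t / t) :=
              fact1 x ((2:ℝ)^k*r) hs
          _ ≤ ∫⁻ t in Set.Ioi ((2:ℝ)^k*r), ENNReal.ofReal (φ x t / t) :=
              lintegral_mono_set Set.Ioc_subset_Ioi_self
          _ ≤ (ENNReal.ofReal θ)^k * ∫⁻ t in Set.Ioi r, ENNReal.ofReal (φ x t / t) :=
              hiter x r hr k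
          _ ≤ (ENNReal.ofReal θ)^k * ENNReal.ofReal (C * φ x r) := by
              gcongr
              exact hint x r hr
          _ = ENNReal.ofReal (θ^k * (C * φ x r)) := by
              rw [← ENNReal.ofReal_pow hθpos.le, ← ENNReal.ofReal_mul (pow_nonneg hθpos.le k)]
      have hR : C⁻¹ * φ x (2*((2:ℝ)^k*r)) / 2 ≤ θ^k * (C * φ x r) :=
        (ENNReal.ofReal_le_ofReal_iff (mul_nonneg (pow_nonneg hθpos.le k) (mul_nonneg hC.le (hφpos x r hr).le))).1 hE
      have hφb : φ x ((2:ℝ)^(k+1)*r) ≤ 2 * C * (θ^k * (C * φ x r)) := by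
        rw [h2]
        rw [div_le_iff₀ (by norm_num : (0:ℝ) < 2), inv_mul_eq_div, div_le_iff₀ hC] at hR
        calc φ x (2*((2:ℝ)^k*r)) ≤ θ^k * (C * φ x r) * 2 * C := hR
          _ = 2 * C * (θ^k * (C * φ x r)) := by ring
      calc φ x ((2:ℝ)^(k+1)*r) ≤ 2 * C * (θ^k * (C * φ x r)) := hφb
        _ = (A' * θ) * θ^k * φ x r := by rw [hAθ]; ring
        _ = A' * θ^(k+1) * φ x r := by ring
  -- main estimate
  have hq : 0 < 1/p := by positivity
  set q := 1/p with hqdef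
  set ρ := θ ^ q with hρdef
  have hρpos : 0 < ρ := Real.rpow_pos_of_pos hθpos q
  have hρlt1 : ρ < 1 := Real.rpow_lt_one hθpos.le hθlt1 hq
  have hCA : (0:ℝ) < C * A' := by positivity
  have hCAq : (0:ℝ) < (C*A')^q := Real.rpow_pos_of_pos hCA q
  refine ⟨(C*A')^q / (1-ρ), div_pos hCAq (by linarith), ?_⟩
  intro x r hr
  have hφr : 0 < φ x r := hφpos x r hr
  have hφrq : 0 < φ x r ^ q := Real.rpow_pos_of_pos hφr q
  -- the dyadic decomposition
  have hU : Set.Ioi r = ⋃ k:ℕ, Set.Ioc ((2:ℝ)^k * r) ((2:ℝ)^(k+1) * r) := by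
    ext t
    simp only [Set.mem_Ioi, Set.mem_iUnion, Set.mem_Ioc]
    constructor
    · intro ht
      have hex : ∃ k:ℕ, t ≤ (2:ℝ)^(k+1) * r := by
        obtain ⟨k, hk⟩ := pow_unbounded_of_one_lt (t/r) (by norm_num : (1:ℝ) < 2)
        rw [div_lt_iff₀ hr] at hk
        refine ⟨k, le_trans hk.le ?_⟩
        have : (2:ℝ)^k ≤ (2:ℝ)^(k+1) := by
          apply pow_le_pow_right₀ (by norm_num) (Nat.le_succ k)
        nlinarith
      refine ⟨Nat.find hex, ?_, Nat.find_spec hex⟩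
      cases h : Nat.find hex with
      | zero => simpa using ht
      | succ m =>
        have hmin := Nat.find_min hex (show m < Nat.find hex by omega)
        push_neg at hmin
        exact hmin
    · rintro ⟨k, hk1, _⟩
      have h1 : (1:ℝ) ≤ (2:ℝ)^k := one_le_pow₀ (by norm_num)
      nlinarith
  have hdisj : Pairwise (Function.onFun Disjoint
      fun k:ℕ => Set.Ioc ((2:ℝ)^k * r) ((2:ℝ)^(k+1) * r)) := by
    have haux : ∀ i j : ℕ, i < j →
        Disjoint (Set.Ioc ((2:ℝ)^i * r) ((2:ℝ)^(i+1) * r))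
          (Set.Ioc ((2:ℝ)^j * r) ((2:ℝ)^(j+1) * r)) := by
      intro i j hij
      rw [Set.Ioc_disjoint_Ioc]
      refine le_trans (min_le_left _ _) (le_trans ?_ (le_max_right _ _))
      have : (2:ℝ)^(i+1) ≤ (2:ℝ)^j := pow_le_pow_right₀ (by norm_num) hij
      nlinarith
    intro i j hij
    rcases lt_or_gt_of_ne hij with h | h
    · exact haux i j h
    · exact (haux j i h).symm
  -- powers commute
  have hpowk : ∀ k : ℕ, ((θ:ℝ)^k) ^ q = ρ ^ k := by
    intro k
    rw [hρdef, ← Real.rpow_natCast θ k, ← Real.rpow_natCast (θ ^ q) k,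
      ← Real.rpow_mul hθpos.le, ← Real.rpow_mul hθpos.le, mul_comm]
  -- per-piece bound
  have hpiece : ∀ k:ℕ, ∫⁻ t in Set.Ioc ((2:ℝ)^k*r) ((2:ℝ)^(k+1)*r),
      ENNReal.ofReal (φ x t ^ q / t)
      ≤ ENNReal.ofReal ((C*A')^q * φ x r ^ q * ρ^k) := by
    intro k
    have hapos : 0 < (2:ℝ)^k * r := by positivity
    have h2a : (2:ℝ)^(k+1) * r = 2*((2:ℝ)^k * r) := by ring
    have hBpos : 0 < C * (A' * θ^k * φ x r) := mul_pos hC (mul_pos (mul_pos hA'pos (pow_pos hθpos k)) hφr)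
    have hstep : ∀ t ∈ Set.Ioc ((2:ℝ)^k*r) ((2:ℝ)^(k+1)*r),
        ENNReal.ofReal (φ x t ^ q / t)
          ≤ ENNReal.ofReal ((C * (A' * θ^k * φ x r)) ^ q / ((2:ℝ)^k * r)) := by
      rintro t ⟨ht1, ht2⟩
      apply ENNReal.ofReal_le_ofReal
      have htpos : 0 < t := hapos.trans ht1
      have ht2' : t ≤ 2*((2:ℝ)^k * r) := by rw [← h2a]; exact ht2
      have hd := (hdoub x t ((2:ℝ)^k*r) htpos hapos
        (by rw [le_div_iff₀ hapos]; linarith)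
        (by rw [div_le_iff₀ hapos]; linarith)).2
      have hφt : φ x t ≤ C * φ x ((2:ℝ)^k*r) := by
        rw [div_le_iff₀ (hφpos x ((2:ℝ)^k*r) hapos)] at hd
        linarith
      have hφt2 : φ x t ≤ C * (A' * θ^k * φ x r) :=
        hφt.trans (mul_le_mul_of_nonneg_left (hdecay x r hr k) hC.le)
      have h1 : φ x t ^ q ≤ (C * (A' * θ^k * φ x r))^q :=
        Real.rpow_le_rpow (le_of_lt (hφpos x t htpos)) hφt2 hq.le
      exact div_le_div₀ (Real.rpow_nonneg hBpos.le q) h1 hapos ht1.le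
    have hval : (C * (A' * θ^k * φ x r))^q / ((2:ℝ)^k * r) * ((2:ℝ)^k * r)
        = (C*A')^q * φ x r ^ q * ρ^k := by
      rw [div_mul_cancel₀ _ (ne_of_gt hapos)]
      rw [show C * (A' * θ^k * φ x r) = (C*A') * φ x r * θ^k by ring]
      rw [Real.mul_rpow (mul_nonneg hCA.le hφr.le) (pow_nonneg hθpos.le k),
        Real.mul_rpow hCA.le hφr.le, hpowk k]
    calc ∫⁻ t in Set.Ioc ((2:ℝ)^k*r) ((2:ℝ)^(k+1)*r), ENNReal.ofReal (φ x t ^ q / t)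
        ≤ ∫⁻ _ in Set.Ioc ((2:ℝ)^k*r) ((2:ℝ)^(k+1)*r),
            ENNReal.ofReal ((C * (A' * θ^k * φ x r)) ^ q / ((2:ℝ)^k * r)) :=
          setLIntegral_mono' measurableSet_Ioc hstep
      _ = ENNReal.ofReal ((C * (A' * θ^k * φ x r)) ^ q / ((2:ℝ)^k * r))
            * volume (Set.Ioc ((2:ℝ)^k*r) ((2:ℝ)^(k+1)*r)) := setLIntegral_const _ _
      _ = ENNReal.ofReal ((C*A')^q * φ x r ^ q * ρ^k) := by
          rw [Real.volume_Ioc, ← ENNReal.ofReal_mul (div_nonneg (Real.rpow_nonneg hBpos.le q) hapos.le), ← hval]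
          congr 2
          rw [h2a]; ring
  have hsummable : Summable (fun k:ℕ => (C*A')^q * φ x r ^ q * ρ^k) :=
    (summable_geometric_of_lt_one hρpos.le hρlt1).mul_left _
  calc ∫⁻ t in Set.Ioi r, ENNReal.ofReal (φ x t ^ q / t)
      = ∑' k:ℕ, ∫⁻ t in Set.Ioc ((2:ℝ)^k*r) ((2:ℝ)^(k+1)*r), ENNReal.ofReal (φ x t ^ q / t) := by
        rw [hU, lintegral_iUnion (fun k => measurableSet_Ioc) hdisj]
    _ ≤ ∑' k:ℕ, ENNReal.ofReal ((C*A')^q * φ x r ^ q * ρ^k) := ENNReal.tsum_le_tsum hpiece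
    _ = ENNReal.ofReal (∑' k:ℕ, (C*A')^q * φ x r ^ q * ρ^k) :=
        (ENNReal.ofReal_tsum_of_nonneg (fun k => mul_nonneg (mul_nonneg hCAq.le hφrq.le) (pow_nonneg hρpos.le k)) hsummable).symm
    _ = ENNReal.ofReal ((C*A')^q / (1-ρ) * φ x r ^ q) := by
        rw [tsum_mul_left, tsum_geometric_of_lt_one hρpos.le hρlt1]
        congr 1
        ring
end

section
/- Let 1 < p < q < ∞, p_i ∈ (1,∞) with ∑_{i=1}^m 1/p_i = 1/p, and ρ, φ, φ_i : ℝⁿ×(0,∞) → (0,∞) with ∏_{i=1}^m φ_i^{1/p_i} = φ^{1/p} and ρ(x,r)φ(x,r)^{1/p} ≤ C₀ φ(x,r)^{1/q} for all x, r. Assume that for each x ∈ ℝⁿ, φ(x,·) is continuous, strictly decreasing, and a bijection from (0,∞) onto itself. Then for all f_i with ‖f_i‖_{L^{(p_i,φ_i)}} = 1 (i = 1,…,m) and all x ∈ ℝⁿ, one has the pointwise estimate 𝓜_ρ(f⃗)(x) ≤ C₀ 𝓜(f⃗)(x)^{p/q}. -/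
open MeasureTheory Metric ENNReal

/-- The generalized Morrey norm of a real function. -/
noncomputable def morreyNorm (n : ℕ) (p : ℝ)
    (φ : EuclideanSpace ℝ (Fin n) → ℝ → ℝ) (f : EuclideanSpace ℝ (Fin n) → ℝ) : ℝ≥0∞ :=
  ⨆ (x : EuclideanSpace ℝ (Fin n)) (r : ℝ) (_ : 0 < r),
    ((∫⁻ y in ball x r, ENNReal.ofReal (|f y| ^ p)) /
      (ENNReal.ofReal (φ x r) * volume (ball x r))) ^ (1 / p)

/-- The generalized `m`-linear maximal operator
`𝓜_ρ(f⃗)(x) = sup_{B ∋ x} ρ(B) ∏ᵢ ⨍_B |fᵢ|`. -/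
noncomputable def genMultiMaximal (n m : ℕ) (ρ : EuclideanSpace ℝ (Fin n) → ℝ → ℝ)
    (f : Fin m → EuclideanSpace ℝ (Fin n) → ℝ) (x : EuclideanSpace ℝ (Fin n)) : ℝ≥0∞ :=
  ⨆ (z : EuclideanSpace ℝ (Fin n)) (r : ℝ) (_ : 0 < r) (_ : x ∈ ball z r),
    ENNReal.ofReal (ρ z r) *
      ∏ i, (∫⁻ y in ball z r, ENNReal.ofReal |f i y|) / volume (ball z r)

/-- pointwise estimate `𝓜_ρ(f⃗)(x) ≤ C₀ 𝓜(f⃗)(x)^{p/q}` for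
functions with unit Morrey norms. -/
theorem genMultiMaximal_pointwise (n m : ℕ) (p q : ℝ) (pp : Fin m → ℝ)
    (hp : 1 < p) (hpq : p < q) (hq : 1 < q) (hpp : ∀ i, 1 < pp i)
    (hsum : ∑ i, 1 / pp i = 1 / p)
    (ρ φ : EuclideanSpace ℝ (Fin n) → ℝ → ℝ)
    (φi : Fin m → EuclideanSpace ℝ (Fin n) → ℝ → ℝ)
    (hρpos : ∀ x r, 0 < r → 0 < ρ x r)
    (hφpos : ∀ x r, 0 < r → 0 < φ x r)
    (hφipos : ∀ i x r, 0 < r → 0 < φi i x r)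
    (hprod : ∀ x (r : ℝ), 0 < r → ∏ i, φi i x r ^ (1 / pp i) = φ x r ^ (1 / p))
    (C₀ : ℝ) (hC₀ : 0 < C₀)
    (hρφ : ∀ x (r : ℝ), 0 < r → ρ x r * φ x r ^ (1 / p) ≤ C₀ * φ x r ^ (1 / q))
    (hφcont : ∀ x, ContinuousOn (fun r => φ x r) (Set.Ioi 0))
    (hφanti : ∀ x, StrictAntiOn (fun r => φ x r) (Set.Ioi 0))
    (hφbij : ∀ x, Set.BijOn (fun r => φ x r) (Set.Ioi 0) (Set.Ioi 0)) :
    ∀ f : Fin m → EuclideanSpace ℝ (Fin n) → ℝ,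
      (∀ i, Measurable (f i)) →
      (∀ i, morreyNorm n (pp i) (φi i) (f i) = 1) →
      ∀ x, genMultiMaximal n m ρ f x
        ≤ ENNReal.ofReal C₀ * (genMultiMaximal n m (fun _ _ => 1) f x) ^ (p / q) := by
  intro f hfm hfnorm x
  have hp0 : (0:ℝ) < p := lt_trans one_pos hp
  have hq0 : (0:ℝ) < q := lt_trans one_pos hq
  have hpq01 : (0:ℝ) < p / q := div_pos hp0 hq0
  have hpq1 : p / q ≤ 1 := by rw [div_le_one hq0]; exact hpq.le
  have h1pq : (0:ℝ) ≤ 1 - p / q := by linarith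
  rw [genMultiMaximal]
  refine iSup_le fun z => iSup_le fun r => iSup_le fun hr => iSup_le fun hx => ?_
  set B := ball z r with hB
  have hV0 : volume B ≠ 0 := (measure_ball_pos volume z hr).ne'
  have hVtop : volume B ≠ ⊤ := measure_ball_lt_top.ne
  set A : ℝ≥0∞ := ∏ i, (∫⁻ y in B, ENNReal.ofReal |f i y|) / volume B with hA
  -- each averaged factor is bounded by `φi i z r ^ (1/pp i)`
  have hfac : ∀ i : Fin m, (∫⁻ y in B, ENNReal.ofReal |f i y|) / volume B
      ≤ ENNReal.ofReal (φi i z r) ^ (1 / pp i) := by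
    intro i
    have hpi : (0:ℝ) < pp i := lt_trans one_pos (hpp i)
    -- Morrey norm bound for the ball B
    have hmor : (∫⁻ y in B, ENNReal.ofReal (|f i y| ^ pp i))
        ≤ ENNReal.ofReal (φi i z r) * volume B := by
      have h1 : ((∫⁻ y in B, ENNReal.ofReal (|f i y| ^ pp i)) /
          (ENNReal.ofReal (φi i z r) * volume B)) ^ (1 / pp i) ≤ 1 := by
        rw [← hfnorm i, morreyNorm]
        exact le_iSup_of_le z (le_iSup_of_le r (le_iSup_of_le hr le_rfl))
      have h2 : ((∫⁻ y in B, ENNReal.ofReal (|f i y| ^ pp i)) /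
          (ENNReal.ofReal (φi i z r) * volume B)) ≤ 1 := by
        have h3 := ENNReal.rpow_le_rpow h1 hpi.le
        rwa [← ENNReal.rpow_mul, one_div, inv_mul_cancel₀ hpi.ne', ENNReal.rpow_one,
          ENNReal.one_rpow] at h3
      have hden0 : ENNReal.ofReal (φi i z r) * volume B ≠ 0 :=
        mul_ne_zero (ENNReal.ofReal_pos.2 (hφipos i z r hr)).ne' hV0
      have hdent : ENNReal.ofReal (φi i z r) * volume B ≠ ⊤ :=
        ENNReal.mul_ne_top ENNReal.ofReal_ne_top hVtop
      have h4 := (ENNReal.div_le_iff hden0 hdent).1 h2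
      simpa using h4
    -- Hölder inequality for a single integral
    have hconj : (pp i).HolderConjugate ((pp i).conjExponent) :=
      Real.HolderConjugate.conjExponent (hpp i)
    have hmeas : AEMeasurable (fun y => ENNReal.ofReal |f i y|) (volume.restrict B) :=
      (ENNReal.measurable_ofReal.comp (hfm i).abs).aemeasurable
    have hold := ENNReal.lintegral_mul_le_Lp_mul_Lq (volume.restrict B) hconj hmeas
      (aemeasurable_const (b := (1 : ℝ≥0∞)))
    simp only [Pi.mul_apply, mul_one, ENNReal.one_rpow] at hold
    have hone : (∫⁻ _ in B, (1:ℝ≥0∞)) = volume B := by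
      simp
    rw [hone] at hold
    have hpow : ∀ y, (ENNReal.ofReal |f i y|) ^ (pp i)
        = ENNReal.ofReal (|f i y| ^ pp i) := fun y =>
      ENNReal.ofReal_rpow_of_nonneg (abs_nonneg _) hpi.le
    simp only [hpow] at hold
    have hsub : (0:ℝ) ≤ 1 - 1 / pp i := by
      have : 1 / pp i ≤ 1 := by rw [div_le_one hpi]; exact (hpp i).le
      linarith
    -- combine
    have hint : (∫⁻ y in B, ENNReal.ofReal |f i y|)
        ≤ ENNReal.ofReal (φi i z r) ^ (1 / pp i) * volume B := by
      have h5 : ((∫⁻ y in B, ENNReal.ofReal (|f i y| ^ pp i)) ^ (1 / pp i))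
          ≤ (ENNReal.ofReal (φi i z r) * volume B) ^ (1 / pp i) :=
        ENNReal.rpow_le_rpow hmor (by positivity)
      have h6 : (ENNReal.ofReal (φi i z r) * volume B) ^ (1 / pp i)
          = ENNReal.ofReal (φi i z r) ^ (1 / pp i) * (volume B) ^ (1 / pp i) :=
        ENNReal.mul_rpow_of_nonneg _ _ (by positivity)
      have hexp : 1 / (pp i).conjExponent = 1 - 1/(pp i) := by
        rw [one_div, ← hconj.one_sub_inv, one_div]
      rw [hexp] at hold
      calc (∫⁻ y in B, ENNReal.ofReal |f i y|)
          ≤ (∫⁻ y in B, ENNReal.ofReal (|f i y| ^ pp i)) ^ (1 / pp i) *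
              (volume B) ^ (1 - 1 / pp i) := hold
        _ ≤ (ENNReal.ofReal (φi i z r) * volume B) ^ (1 / pp i) *
              (volume B) ^ (1 - 1 / pp i) := mul_le_mul_left h5 _
        _ = ENNReal.ofReal (φi i z r) ^ (1 / pp i) *
              ((volume B) ^ (1 / pp i) * (volume B) ^ (1 - 1 / pp i)) := by
            rw [h6, mul_assoc]
        _ = ENNReal.ofReal (φi i z r) ^ (1 / pp i) * volume B := by
            rw [← ENNReal.rpow_add_of_nonneg _ _ (by positivity) hsub,
              show 1 / pp i + (1 - 1 / pp i) = 1 by ring, ENNReal.rpow_one]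
    rw [ENNReal.div_le_iff hV0 hVtop]
    exact hint
  -- A is bounded by `φ z r ^ (1/p)`
  have hAφ : A ≤ ENNReal.ofReal (φ z r) ^ (1 / p) := by
    calc A ≤ ∏ i, ENNReal.ofReal (φi i z r) ^ (1 / pp i) :=
          Finset.prod_le_prod' fun i _ => hfac i
      _ = ENNReal.ofReal (φ z r) ^ (1 / p) := by
          rw [ENNReal.ofReal_rpow_of_pos (hφpos z r hr), ← hprod z r hr,
            ENNReal.ofReal_prod_of_nonneg (fun i _ =>
              Real.rpow_nonneg (hφipos i z r hr).le _)]
          exact Finset.prod_congr rfl fun i _ =>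
            ENNReal.ofReal_rpow_of_pos (hφipos i z r hr)
  -- A is bounded by the (untwisted) maximal function
  have hAM : A ≤ genMultiMaximal n m (fun _ _ => 1) f x := by
    have h7 : ENNReal.ofReal 1 * A ≤ genMultiMaximal n m (fun _ _ => 1) f x := by
      rw [genMultiMaximal]
      exact le_iSup_of_le z (le_iSup_of_le r (le_iSup_of_le hr (le_iSup_of_le hx le_rfl)))
    simpa using h7
  -- key scalar inequality
  have hkey : ρ z r * φ z r ^ (1/p - 1/q) ≤ C₀ := by
    have hφ' : (0:ℝ) < φ z r ^ (1/q) := Real.rpow_pos_of_pos (hφpos z r hr) _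
    rw [← mul_le_mul_iff_of_pos_right hφ']
    calc ρ z r * φ z r ^ (1/p - 1/q) * φ z r ^ (1/q)
        = ρ z r * φ z r ^ (1/p) := by
          rw [mul_assoc, ← Real.rpow_add (hφpos z r hr), sub_add_cancel]
      _ ≤ C₀ * φ z r ^ (1/q) := hρφ z r hr
  have hkey' : ENNReal.ofReal (ρ z r) * ENNReal.ofReal (φ z r) ^ (1/p - 1/q)
      ≤ ENNReal.ofReal C₀ := by
    rw [ENNReal.ofReal_rpow_of_pos (hφpos z r hr),
      ← ENNReal.ofReal_mul (hρpos z r hr).le]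
    exact ENNReal.ofReal_le_ofReal hkey
  -- split A and combine
  have hsplit : A = A ^ (1 - p/q) * A ^ (p/q) := by
    have e1 : (1 - p/q) + p/q = 1 := by ring
    calc A = A ^ ((1 - p/q) + (p/q)) := by rw [e1, ENNReal.rpow_one]
      _ = A ^ (1 - p/q) * A ^ (p/q) := ENNReal.rpow_add_of_nonneg _ _ h1pq hpq01.le
  have e2 : (1/p) * (1 - p/q) = 1/p - 1/q := by field_simp
  calc ENNReal.ofReal (ρ z r) * A
      = ENNReal.ofReal (ρ z r) * (A ^ (1 - p/q) * A ^ (p/q)) := by rw [← hsplit]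
    _ ≤ ENNReal.ofReal (ρ z r) *
          ((ENNReal.ofReal (φ z r) ^ (1/p)) ^ (1 - p/q) * A ^ (p/q)) := by
        exact mul_le_mul_right (mul_le_mul_left (ENNReal.rpow_le_rpow hAφ h1pq) _) _
    _ = (ENNReal.ofReal (ρ z r) * ENNReal.ofReal (φ z r) ^ (1/p - 1/q)) * A ^ (p/q) := by
        rw [← ENNReal.rpow_mul, e2, mul_assoc]
    _ ≤ ENNReal.ofReal C₀ * A ^ (p/q) := mul_le_mul_left hkey' _
    _ ≤ ENNReal.ofReal C₀ * (genMultiMaximal n m (fun _ _ => 1) f x) ^ (p/q) :=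
        mul_le_mul_right (ENNReal.rpow_le_rpow hAM hpq01.le) _
end

section
/- Let p, p_i ∈ (1,∞) with ∑_{i=1}^m 1/p_i = 1/p, and φ, φ_i : ℝⁿ×(0,∞) → (0,∞) satisfying ∏_{i=1}^m φ_i^{1/p_i} = φ^{1/p} and the doubling condition for φ. Let K : (ℝⁿ)^{m+1} → ℂ (defined away from the diagonal x = y_1 = ⋯ = y_m) satisfy the size condition |K(x,y_1,…,y_m)| ≤ A/(∑_{i=1}^m |x−y_i|)^{mn}. Then there is a constant C such that for all f_i ∈ L^{(p_i,φ_i)}(ℝⁿ), every ball B = B(z,r), and every x ∈ B, with f_i^∞ = f_i χ_{(2B)^∁}: ∫_{(ℝⁿ)^m} |K(x,y_1,…,y_m) ∏_{i=1}^m f_i^∞(y_i)| dy_1⋯dy_m ≤ C (∫_{2r}^∞ φ(z,t)^{1/p}/t dt) ∏_{i=1}^m ‖f_i‖_{L^{(p_i,φ_i)}}. -/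
open MeasureTheory Metric ENNReal

/-- Doubling condition. -/
def DoublingCond (n : ℕ) (φ : EuclideanSpace ℝ (Fin n) → ℝ → ℝ) : Prop :=
  ∃ C > (0 : ℝ), ∀ x (r s : ℝ), 0 < r → 0 < s → 1 / 2 ≤ r / s → r / s ≤ 2 →
    C⁻¹ ≤ φ x r / φ x s ∧ φ x r / φ x s ≤ C

theorem my_lintegral_fin_prod {m : ℕ} {E : Type*} [MeasureSpace E]
    [SigmaFinite (volume : Measure E)]
    (g : Fin m → E → ℝ≥0∞) (hg : ∀ i, Measurable (g i)) :
    ∫⁻ y : Fin m → E, ∏ i, g i (y i) = ∏ i, ∫⁻ t, g i t := by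
  induction m with
  | zero => simp [volume_pi, lintegral_const]
  | succ m ih =>
    have hmp := (measurePreserving_piFinSuccAbove (fun _ : Fin (m+1) => (volume : Measure E)) 0).symm
    rw [volume_pi, ← hmp.lintegral_comp_emb (MeasurableEquiv.measurableEmbedding _)]
    simp_rw [MeasurableEquiv.piFinSuccAbove_symm_apply, Fin.insertNthEquiv,
      Fin.prod_univ_succ, Fin.insertNth_zero]
    simp only [Fin.zero_succAbove, Function.comp_def, Fin.cons_zero, Fin.cons_succ, cast_eq,
      Equiv.coe_fn_mk]
    have h2 : Measurable fun w : Fin m → E => ∏ x, g x.succ (w x) :=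
      Finset.measurable_prod Finset.univ fun j _ => (hg j.succ).comp (measurable_pi_apply j)
    rw [show (∫⁻ (a : E × (Fin m → E)), g 0 a.1 * ∏ x : Fin m, g x.succ (a.2 x)
          ∂((volume : Measure E).prod (Measure.pi fun _ => (volume : Measure E)))) =
        (∫⁻ t, g 0 t) * ∫⁻ w : Fin m → E, (∏ x, g x.succ (w x)) ∂(Measure.pi fun _ => (volume : Measure E))
        from lintegral_prod_mul (hg 0).aemeasurable h2.aemeasurable]
    rw [← volume_pi, ih (fun j => g j.succ) (fun j => hg j.succ)]

/-- for a kernel with the standard size estimate, the "far part"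
of the multilinear singular integral is controlled:
`∫ |K(x,y⃗) ∏ fᵢ^∞(yᵢ)| dy⃗ ≤ C (∫_{2r}^∞ φ(z,t)^{1/p}/t dt) ∏ ‖fᵢ‖_{L^{(pᵢ,φᵢ)}}`. -/
theorem far_part_kernel_estimate (n m : ℕ) (p : ℝ) (pp : Fin m → ℝ)
    (hp : 1 < p) (hpp : ∀ i, 1 < pp i)
    (hsum : ∑ i, 1 / pp i = 1 / p)
    (φ : EuclideanSpace ℝ (Fin n) → ℝ → ℝ)
    (φi : Fin m → EuclideanSpace ℝ (Fin n) → ℝ → ℝ)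
    (hφpos : ∀ x r, 0 < r → 0 < φ x r)
    (hφipos : ∀ i x r, 0 < r → 0 < φi i x r)
    (hprod : ∀ x (r : ℝ), 0 < r → ∏ i, φi i x r ^ (1 / pp i) = φ x r ^ (1 / p))
    (hφdoub : DoublingCond n φ)
    (K : EuclideanSpace ℝ (Fin n) → (Fin m → EuclideanSpace ℝ (Fin n)) → ℝ)
    (hKmeas : Measurable (Function.uncurry K))
    (A : ℝ) (hA : 0 < A)
    (hKsize : ∀ x y, (∃ i, y i ≠ x) →
      |K x y| ≤ A / (∑ i, dist x (y i)) ^ (m * n)) :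
    ∃ C : ℝ, 0 < C ∧
      ∀ f : Fin m → EuclideanSpace ℝ (Fin n) → ℝ, (∀ i, Measurable (f i)) →
        ∀ z (r : ℝ), 0 < r → ∀ x ∈ ball z r,
          (∫⁻ y : Fin m → EuclideanSpace ℝ (Fin n),
              ENNReal.ofReal |K x y| *
                ∏ i, ENNReal.ofReal |((ball z (2 * r))ᶜ).indicator (f i) (y i)|)
            ≤ ENNReal.ofReal C *
                (∫⁻ t in Set.Ioi (2 * r), ENNReal.ofReal (φ z t ^ (1 / p) / t)) *
                ∏ i, morreyNorm n (pp i) (φi i) (f i) := by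
  classical
  have hp0 : 0 < p := lt_trans one_pos hp
  have hpp0 : ∀ i, 0 < pp i := fun i => lt_trans one_pos (hpp i)
  have hm : m ≠ 0 := by
    rintro rfl
    rw [Finset.univ_eq_empty, Finset.sum_empty] at hsum
    have h1 : 0 < 1 / p := by positivity
    rw [← hsum] at h1; exact lt_irrefl _ h1
  haveI hne : Nonempty (Fin m) := Fin.pos_iff_nonempty.mp (Nat.pos_of_ne_zero hm)
  obtain ⟨Cd, hCd0, hCdub⟩ := hφdoub
  set v1 : ℝ≥0∞ := volume (ball (0 : EuclideanSpace ℝ (Fin n)) 1) with hv1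
  have hv1pos : 0 < v1 := measure_ball_pos _ _ one_pos
  have hv1top : v1 ≠ ⊤ := measure_ball_lt_top.ne
  have hv1tr : 0 < v1.toReal := ENNReal.toReal_pos hv1pos.ne' hv1top
  refine ⟨A * 4 ^ (m*n) * v1.toReal ^ m * (2 * Cd ^ (1/p)), by positivity, ?_⟩
  intro f hf z r hr x hx
  set N : Fin m → ℝ≥0∞ := fun i => morreyNorm n (pp i) (φi i) (f i) with hN
  set g : Fin m → EuclideanSpace ℝ (Fin n) → ℝ≥0∞ :=
    fun i t => ENNReal.ofReal |((ball z (2*r))ᶜ).indicator (f i) t| with hgdef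
  have hgmeas : ∀ i, Measurable (g i) := fun i =>
    (((hf i).indicator measurableSet_ball.compl).abs).ennreal_ofReal
  have hgle : ∀ i t, g i t ≤ ENNReal.ofReal |f i t| := by
    intro i t
    by_cases ht : t ∈ (ball z (2*r))ᶜ
    · simp [hgdef, Set.indicator_of_mem ht]
    · simp [hgdef, Set.indicator_of_notMem ht]
  -- radii
  have hRpos : ∀ k : ℕ, (0:ℝ) < 2^(k+1) * r := fun k => by positivity
  have hR'pos : ∀ k : ℕ, (0:ℝ) < 2^(k+1) * r + r := fun k => by positivity
  have hxz : dist x z < r := mem_ball.mp hx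
  have hsub : ∀ k : ℕ, ball x (2^(k+1)*r) ⊆ ball z (2^(k+1)*r + r) := by
    intro k
    exact ball_subset_ball' (by linarith)
  -- per-factor Morrey/Hölder estimate
  have hfactor : ∀ (k : ℕ) i,
      (∫⁻ t in ball x (2^(k+1)*r), g i t)
        ≤ N i * ENNReal.ofReal (φi i z (2^(k+1)*r + r)) ^ (1/pp i) *
            volume (ball z (2^(k+1)*r + r)) := by
    intro k i
    have hq := Real.HolderConjugate.conjExponent (hpp i)
    have hVle : volume (ball x (2^(k+1)*r)) ≤ volume (ball z (2^(k+1)*r + r)) :=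
      measure_mono (hsub k)
    have hV'0 : volume (ball z (2^(k+1)*r + r)) ≠ 0 :=
      (measure_ball_pos _ _ (hR'pos k)).ne'
    have hV'top : volume (ball z (2^(k+1)*r + r)) ≠ ⊤ := measure_ball_lt_top.ne
    have hhold : (∫⁻ t in ball x (2^(k+1)*r), g i t)
        ≤ (∫⁻ t in ball x (2^(k+1)*r), g i t ^ pp i) ^ (1/pp i) *
            volume (ball x (2^(k+1)*r)) ^ (1/(pp i).conjExponent) := by
      have h := ENNReal.lintegral_mul_le_Lp_mul_Lq ((volume).restrict (ball x (2^(k+1)*r))) hq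
        (hgmeas i).aemeasurable (aemeasurable_const (b := (1:ℝ≥0∞)))
      simpa [Pi.mul_apply, mul_one, ENNReal.one_rpow, lintegral_const,
        Measure.restrict_apply, Set.univ_inter] using h
    have hmono : (∫⁻ t in ball x (2^(k+1)*r), g i t ^ pp i)
        ≤ ∫⁻ t in ball z (2^(k+1)*r + r), ENNReal.ofReal (|f i t| ^ pp i) := by
      refine le_trans (lintegral_mono fun t => ?_)
        (lintegral_mono' (Measure.restrict_mono (hsub k) le_rfl) le_rfl)
      calc g i t ^ pp i ≤ ENNReal.ofReal |f i t| ^ pp i :=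
            ENNReal.rpow_le_rpow (hgle i t) (hpp0 i).le
        _ = ENNReal.ofReal (|f i t| ^ pp i) :=
            ENNReal.ofReal_rpow_of_nonneg (abs_nonneg _) (hpp0 i).le
    have hD0 : ENNReal.ofReal (φi i z (2^(k+1)*r + r)) * volume (ball z (2^(k+1)*r + r)) ≠ 0 := by
      refine mul_ne_zero ?_ hV'0
      simp [ENNReal.ofReal_eq_zero, not_le, hφipos i z _ (hR'pos k)]
    have hDtop : ENNReal.ofReal (φi i z (2^(k+1)*r + r)) * volume (ball z (2^(k+1)*r + r)) ≠ ⊤ :=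
      ENNReal.mul_ne_top ENNReal.ofReal_ne_top hV'top
    have hMorrey : (∫⁻ t in ball z (2^(k+1)*r + r), ENNReal.ofReal (|f i t| ^ pp i))
        ≤ N i ^ pp i *
          (ENNReal.ofReal (φi i z (2^(k+1)*r + r)) * volume (ball z (2^(k+1)*r + r))) := by
      have hle : ((∫⁻ t in ball z (2^(k+1)*r + r), ENNReal.ofReal (|f i t| ^ pp i)) /
          (ENNReal.ofReal (φi i z (2^(k+1)*r + r)) * volume (ball z (2^(k+1)*r + r)))) ^ (1/pp i)
            ≤ N i := by
        rw [hN]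
        exact le_iSup_of_le z (le_iSup_of_le (2^(k+1)*r + r) (le_iSup_of_le (hR'pos k) le_rfl))
      have h2 := ENNReal.rpow_le_rpow hle (hpp0 i).le
      rw [← ENNReal.rpow_mul, one_div, inv_mul_cancel₀ (hpp0 i).ne', ENNReal.rpow_one] at h2
      exact (ENNReal.div_le_iff_le_mul (Or.inl hD0) (Or.inl hDtop)).mp h2
    calc (∫⁻ t in ball x (2^(k+1)*r), g i t)
        ≤ (∫⁻ t in ball x (2^(k+1)*r), g i t ^ pp i) ^ (1/pp i) *
            volume (ball x (2^(k+1)*r)) ^ (1/(pp i).conjExponent) := hhold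
      _ ≤ (N i ^ pp i * (ENNReal.ofReal (φi i z (2^(k+1)*r + r)) *
            volume (ball z (2^(k+1)*r + r)))) ^ (1/pp i) *
            volume (ball z (2^(k+1)*r + r)) ^ (1/(pp i).conjExponent) := by
          gcongr
          · exact one_div_nonneg.mpr (hpp0 i).le
          · exact le_trans hmono hMorrey
          · exact hq.symm.one_div_nonneg
      _ = N i * ENNReal.ofReal (φi i z (2^(k+1)*r + r)) ^ (1/pp i) *
            (volume (ball z (2^(k+1)*r + r)) ^ (1/pp i) *
             volume (ball z (2^(k+1)*r + r)) ^ (1/(pp i).conjExponent)) := by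
          rw [ENNReal.mul_rpow_of_nonneg _ _ (one_div_nonneg.mpr (hpp0 i).le),
            ENNReal.mul_rpow_of_nonneg _ _ (one_div_nonneg.mpr (hpp0 i).le),
            ← ENNReal.rpow_mul, mul_one_div, div_self (hpp0 i).ne', ENNReal.rpow_one]
          ring
      _ = N i * ENNReal.ofReal (φi i z (2^(k+1)*r + r)) ^ (1/pp i) *
            volume (ball z (2^(k+1)*r + r)) := by
          rw [← ENNReal.rpow_add _ _ hV'0 hV'top]
          rw [show 1/pp i + 1/(pp i).conjExponent = 1 by
            have := hq.inv_add_inv_eq_one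
            rw [one_div, one_div]; linarith, ENNReal.rpow_one]
  -- combine over i
  have hprodfac : ∀ k : ℕ,
      (∏ i, ∫⁻ t in ball x (2^(k+1)*r), g i t)
        ≤ (∏ i, N i) * ENNReal.ofReal (φ z (2^(k+1)*r + r) ^ (1/p)) *
            volume (ball z (2^(k+1)*r + r)) ^ m := by
    intro k
    calc (∏ i, ∫⁻ t in ball x (2^(k+1)*r), g i t)
        ≤ ∏ i, (N i * ENNReal.ofReal (φi i z (2^(k+1)*r + r)) ^ (1/pp i) *
            volume (ball z (2^(k+1)*r + r))) :=
          Finset.prod_le_prod' (fun i _ => hfactor k i)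
      _ = (∏ i, N i) * (∏ i, ENNReal.ofReal (φi i z (2^(k+1)*r + r)) ^ (1/pp i)) *
            volume (ball z (2^(k+1)*r + r)) ^ m := by
          rw [Finset.prod_mul_distrib, Finset.prod_mul_distrib, Finset.prod_const,
            Finset.card_univ, Fintype.card_fin]
      _ = (∏ i, N i) * ENNReal.ofReal (φ z (2^(k+1)*r + r) ^ (1/p)) *
            volume (ball z (2^(k+1)*r + r)) ^ m := by
          congr 2
          calc (∏ i, ENNReal.ofReal (φi i z (2^(k+1)*r + r)) ^ (1/pp i))
              = ∏ i, ENNReal.ofReal (φi i z (2^(k+1)*r + r) ^ (1/pp i)) := by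
                refine Finset.prod_congr rfl fun i _ => ?_
                rw [ENNReal.ofReal_rpow_of_nonneg (hφipos i z _ (hR'pos k)).le
                  (one_div_nonneg.mpr (hpp0 i).le)]
            _ = ENNReal.ofReal (∏ i, φi i z (2^(k+1)*r + r) ^ (1/pp i)) :=
                (ENNReal.ofReal_prod_of_nonneg fun i _ =>
                  Real.rpow_nonneg (hφipos i z _ (hR'pos k)).le _).symm
            _ = ENNReal.ofReal (φ z (2^(k+1)*r + r) ^ (1/p)) := by
                rw [hprod z _ (hR'pos k)]
  -- pointwise domination by dyadic pieces
  have hpt : ∀ y : Fin m → EuclideanSpace ℝ (Fin n),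
      ENNReal.ofReal |K x y| * ∏ i, g i (y i)
        ≤ ∑' k : ℕ, (Set.univ.pi fun _ : Fin m => ball x (2^(k+1)*r)).indicator
            (fun y' => ENNReal.ofReal (A / (2^k * r)^(m*n)) * ∏ i, g i (y' i)) y := by
    intro y
    by_cases h0 : (∏ i, g i (y i)) = 0
    · rw [h0, mul_zero]; exact zero_le
    have hgne : ∀ i, g i (y i) ≠ 0 := fun i hi =>
      h0 (Finset.prod_eq_zero (Finset.mem_univ i) hi)
    have hout : ∀ i, y i ∉ ball z (2*r) := by
      intro i hi
      apply hgne i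
      have : y i ∉ (ball z (2*r))ᶜ := by simpa using hi
      simp [hgdef, Set.indicator_of_notMem this]
    have hdist : ∀ i, r < dist x (y i) := by
      intro i
      have h2 : 2*r ≤ dist (y i) z := by
        have h3 := hout i; rwa [mem_ball, not_lt] at h3
      have h3 := dist_triangle (y i) x z
      rw [dist_comm]
      linarith
    set M := Finset.univ.sup' Finset.univ_nonempty (fun i => dist x (y i)) with hM
    have i0 : Fin m := Classical.arbitrary _
    have hMr : r < M :=
      lt_of_lt_of_le (hdist i0) (Finset.le_sup' (fun j => dist x (y j)) (Finset.mem_univ i0))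
    have hMr1 : 1 < M / r := (one_lt_div hr).mpr hMr
    set k := ⌊Real.logb 2 (M / r)⌋₊ with hk
    have hk1 : (2:ℝ)^k ≤ M / r := by
      have h1 : (k:ℝ) ≤ Real.logb 2 (M/r) :=
        Nat.floor_le (Real.logb_nonneg one_lt_two hMr1.le)
      calc (2:ℝ)^k = (2:ℝ)^(k:ℝ) := (Real.rpow_natCast 2 k).symm
        _ ≤ (2:ℝ)^(Real.logb 2 (M/r)) := Real.rpow_le_rpow_of_exponent_le one_le_two h1
        _ = M/r := Real.rpow_logb two_pos (by norm_num) (lt_trans one_pos hMr1)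
    have hk2 : M / r < 2^(k+1) := by
      have h1 : Real.logb 2 (M/r) < (k:ℝ)+1 := Nat.lt_floor_add_one _
      calc M/r = (2:ℝ)^(Real.logb 2 (M/r)) :=
            (Real.rpow_logb two_pos (by norm_num) (lt_trans one_pos hMr1)).symm
        _ < (2:ℝ)^((k:ℝ)+1) := Real.rpow_lt_rpow_of_exponent_lt one_lt_two h1
        _ = 2^(k+1) := by
            rw [show ((k:ℝ)+1) = ((k+1:ℕ):ℝ) by push_cast; ring, Real.rpow_natCast]
    have hkM : 2^k * r ≤ M := (le_div_iff₀ hr).mp hk1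
    have hMk : M < 2^(k+1) * r := (div_lt_iff₀ hr).mp hk2
    refine le_trans ?_ (ENNReal.le_tsum k)
    have hyT : y ∈ Set.univ.pi fun _ : Fin m => ball x (2^(k+1)*r) := by
      intro i _
      rw [mem_ball, dist_comm]
      exact lt_of_le_of_lt (Finset.le_sup' (fun j => dist x (y j)) (Finset.mem_univ i)) hMk
    rw [Set.indicator_of_mem hyT]
    refine mul_le_mul_left ?_ _
    apply ENNReal.ofReal_le_ofReal
    have hyne : y i0 ≠ x := by
      intro h; have h4 := hdist i0; rw [h, dist_self] at h4; linarith
    have hSsum : 2^k * r ≤ ∑ i, dist x (y i) := by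
      obtain ⟨i1, -, hi1⟩ := Finset.exists_mem_eq_sup' Finset.univ_nonempty
        (fun i => dist x (y i))
      calc (2:ℝ)^k * r ≤ M := hkM
        _ = dist x (y i1) := hi1
        _ ≤ ∑ i, dist x (y i) :=
            Finset.single_le_sum (fun i _ => dist_nonneg) (Finset.mem_univ i1)
    calc |K x y| ≤ A / (∑ i, dist x (y i))^(m*n) := hKsize x y ⟨i0, hyne⟩
      _ ≤ A / (2^k * r)^(m*n) := by
          gcongr
  -- kernel constant * ball volume bound
  have hconst : ∀ k : ℕ,
      ENNReal.ofReal (A / (2^k * r)^(m*n)) * volume (ball z (2^(k+1)*r + r)) ^ m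
        ≤ ENNReal.ofReal (A * 4^(m*n)) * v1 ^ m := by
    intro k
    have hball : volume (ball z (2^(k+1)*r + r)) ≤ ENNReal.ofReal ((2^(k+2)*r)^n) * v1 := by
      have hss : ball z (2^(k+1)*r + r) ⊆ ball z (2^(k+2)*r) := by
        apply ball_subset_ball
        have h1 : (1:ℝ) ≤ 2^(k+1) := one_le_pow₀ one_le_two
        have h2 : r ≤ 2^(k+1)*r := le_mul_of_one_le_left hr.le h1
        rw [show ((2:ℝ)^(k+2)) = 2^(k+1) + 2^(k+1) from by ring, add_mul]
        linarith
      calc volume (ball z (2^(k+1)*r + r)) ≤ volume (ball z (2^(k+2)*r)) := measure_mono hss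
        _ = ENNReal.ofReal ((2^(k+2)*r)^(Module.finrank ℝ (EuclideanSpace ℝ (Fin n)))) * v1 :=
            Measure.addHaar_ball_of_pos _ _ (by positivity)
        _ = ENNReal.ofReal ((2^(k+2)*r)^n) * v1 := by rw [finrank_euclideanSpace_fin]
    have hreal : A / ((2:ℝ)^k*r)^(m*n) * ((2^(k+2)*r)^n)^m = A * 4^(m*n) := by
      have hB : ((2:ℝ)^k*r)^(m*n) ≠ 0 := by positivity
      rw [← pow_mul, mul_comm n m, show (2:ℝ)^(k+2)*r = 4*(2^k*r) by ring, mul_pow]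
      field_simp
      ring
    calc ENNReal.ofReal (A / (2^k * r)^(m*n)) * volume (ball z (2^(k+1)*r + r)) ^ m
        ≤ ENNReal.ofReal (A / (2^k * r)^(m*n)) * (ENNReal.ofReal ((2^(k+2)*r)^n) * v1)^m := by
          gcongr
      _ = ENNReal.ofReal (A / (2^k * r)^(m*n) * ((2^(k+2)*r)^n)^m) * v1^m := by
          rw [mul_pow (ENNReal.ofReal _) v1 m, ← ENNReal.ofReal_pow (by positivity),
            ← mul_assoc, ← ENNReal.ofReal_mul (by positivity)]
      _ = ENNReal.ofReal (A * 4^(m*n)) * v1 ^ m := by rw [hreal]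
  -- φ value bounded by integral over dyadic interval
  have hphik : ∀ k : ℕ,
      ENNReal.ofReal (φ z (2^(k+1)*r + r) ^ (1/p))
        ≤ ENNReal.ofReal (2 * Cd^(1/p)) *
            ∫⁻ t in Set.Ioc (2^(k+1)*r) (2^(k+2)*r), ENNReal.ofReal (φ z t ^ (1/p) / t) := by
    intro k
    have h1 : (1:ℝ) ≤ 2^(k+1) := one_le_pow₀ one_le_two
    have h2 : r ≤ 2^(k+1)*r := le_mul_of_one_le_left hr.le h1
    have hpow : ((2:ℝ)^(k+2)) = 2^(k+1) + 2^(k+1) := by ring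
    have hCdp : (0:ℝ) < Cd^(1/p) := Real.rpow_pos_of_pos hCd0 _
    have hlow : ∀ t ∈ Set.Ioc ((2:ℝ)^(k+1)*r) (2^(k+2)*r),
        ENNReal.ofReal (φ z (2^(k+1)*r + r) ^ (1/p) / Cd^(1/p) / (2^(k+2)*r))
          ≤ ENNReal.ofReal (φ z t ^ (1/p) / t) := by
      intro t ht
      obtain ⟨ht1, ht2⟩ := ht
      have htpos : 0 < t := lt_trans (by positivity) ht1
      apply ENNReal.ofReal_le_ofReal
      have h12 : 1/2 ≤ (2^(k+1)*r + r) / t := by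
        rw [le_div_iff₀ htpos, hpow] at *
        linarith
      have h22 : (2^(k+1)*r + r) / t ≤ 2 := by
        rw [div_le_iff₀ htpos]
        linarith
      have hdb := (hCdub z (2^(k+1)*r + r) t (hR'pos k) htpos h12 h22).2
      have hphit : 0 < φ z t := hφpos z t htpos
      have h3 : φ z (2^(k+1)*r + r) ≤ Cd * φ z t := by
        rw [div_le_iff₀ hphit] at hdb; linarith
      have h4 : φ z (2^(k+1)*r + r) ^ (1/p) ≤ Cd^(1/p) * φ z t ^ (1/p) := by
        calc φ z (2^(k+1)*r + r) ^ (1/p) ≤ (Cd * φ z t) ^ (1/p) :=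
              Real.rpow_le_rpow (hφpos z _ (hR'pos k)).le h3 (by positivity)
          _ = Cd^(1/p) * φ z t ^ (1/p) := Real.mul_rpow hCd0.le hphit.le
      rw [div_div, div_le_div_iff₀ (by positivity) htpos]
      calc φ z (2^(k+1)*r + r)^(1/p) * t ≤ (Cd^(1/p) * φ z t ^(1/p)) * (2^(k+2)*r) :=
            mul_le_mul h4 ht2 htpos.le (by positivity)
        _ = φ z t ^ (1/p) * (Cd^(1/p) * (2^(k+2)*r)) := by ring
    have hvol : volume (Set.Ioc ((2:ℝ)^(k+1)*r) (2^(k+2)*r)) = ENNReal.ofReal (2^(k+1)*r) := by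
      rw [Real.volume_Ioc]
      congr 1
      rw [hpow]
      ring
    have hIk : ENNReal.ofReal (φ z (2^(k+1)*r + r) ^ (1/p) / Cd^(1/p) / (2^(k+2)*r)) *
        ENNReal.ofReal (2^(k+1)*r)
          ≤ ∫⁻ t in Set.Ioc ((2:ℝ)^(k+1)*r) (2^(k+2)*r), ENNReal.ofReal (φ z t ^ (1/p) / t) := by
      calc ENNReal.ofReal (φ z (2^(k+1)*r + r) ^ (1/p) / Cd^(1/p) / (2^(k+2)*r)) *
            ENNReal.ofReal (2^(k+1)*r)
          = ∫⁻ _t in Set.Ioc ((2:ℝ)^(k+1)*r) (2^(k+2)*r),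
            ENNReal.ofReal (φ z (2^(k+1)*r + r) ^ (1/p) / Cd^(1/p) / (2^(k+2)*r)) := by
            rw [setLIntegral_const, hvol]
        _ ≤ _ := setLIntegral_mono' measurableSet_Ioc hlow
    calc ENNReal.ofReal (φ z (2^(k+1)*r + r) ^ (1/p))
        = ENNReal.ofReal (2 * Cd^(1/p)) *
          (ENNReal.ofReal (φ z (2^(k+1)*r + r) ^ (1/p) / Cd^(1/p) / (2^(k+2)*r)) *
           ENNReal.ofReal (2^(k+1)*r)) := by
          have hb0 : (0:ℝ) ≤ φ z (2^(k+1)*r + r) ^ (1/p) / Cd^(1/p) / (2^(k+2)*r) := by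
            have := (hφpos z _ (hR'pos k)).le
            have h5 : (0:ℝ) ≤ φ z (2^(k+1)*r + r) ^ (1/p) := Real.rpow_nonneg this _
            positivity
          rw [← ENNReal.ofReal_mul hb0, ← ENNReal.ofReal_mul (by positivity)]
          congr 1
          have hne1 : Cd^(1/p) ≠ 0 := hCdp.ne'
          have hne2 : ((2:ℝ)^(k+2)*r) ≠ 0 := by positivity
          field_simp
          rw [hpow]
          ring
      _ ≤ _ := mul_le_mul_right hIk _
  -- sum of dyadic interval integrals bounded by the full integral
  have hsumI : (∑' k : ℕ, ∫⁻ t in Set.Ioc ((2:ℝ)^(k+1)*r) (2^(k+2)*r),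
        ENNReal.ofReal (φ z t ^ (1/p) / t))
      ≤ ∫⁻ t in Set.Ioi (2*r), ENNReal.ofReal (φ z t ^ (1/p) / t) := by
    have hmeasI : ∀ k : ℕ, MeasurableSet (Set.Ioc ((2:ℝ)^(k+1)*r) (2^(k+2)*r)) :=
      fun k => measurableSet_Ioc
    have hdisj : Pairwise (Function.onFun Disjoint
        fun k : ℕ => Set.Ioc ((2:ℝ)^(k+1)*r) (2^(k+2)*r)) := by
      have key : ∀ j k : ℕ, j < k → Disjoint (Set.Ioc ((2:ℝ)^(j+1)*r) (2^(j+2)*r))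
          (Set.Ioc ((2:ℝ)^(k+1)*r) (2^(k+2)*r)) := by
        intro j k h
        refine Set.Ioc_disjoint_Ioc.mpr ?_
        have h1 : (2:ℝ)^(j+2)*r ≤ 2^(k+1)*r := by
          apply mul_le_mul_of_nonneg_right _ hr.le
          apply pow_le_pow_right₀ one_le_two
          omega
        calc min ((2:ℝ)^(j+2)*r) (2^(k+2)*r) ≤ 2^(j+2)*r := min_le_left _ _
          _ ≤ 2^(k+1)*r := h1
          _ ≤ max ((2:ℝ)^(j+1)*r) (2^(k+1)*r) := le_max_right _ _
      intro j k hjk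
      rcases hjk.lt_or_gt with h | h
      · exact key j k h
      · exact (key k j h).symm
    rw [← lintegral_iUnion hmeasI hdisj]
    apply lintegral_mono_set
    intro t ht
    obtain ⟨k, h1, -⟩ := Set.mem_iUnion.mp ht
    have h3 : 2*r ≤ 2^(k+1)*r := by
      apply mul_le_mul_of_nonneg_right _ hr.le
      calc (2:ℝ) = 2^1 := (pow_one 2).symm
        _ ≤ 2^(k+1) := pow_le_pow_right₀ one_le_two (by omega)
    exact lt_of_le_of_lt h3 h1
  -- assemble
  have hTmeas : ∀ k : ℕ, MeasurableSet (Set.univ.pi fun _ : Fin m => ball x (2^(k+1)*r)) :=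
    fun k => MeasurableSet.univ_pi fun _ => measurableSet_ball
  have hHmeas : ∀ k : ℕ, AEMeasurable (fun y : Fin m → EuclideanSpace ℝ (Fin n) =>
      (Set.univ.pi fun _ : Fin m => ball x (2^(k+1)*r)).indicator
        (fun y' => ENNReal.ofReal (A / (2^k * r)^(m*n)) * ∏ i, g i (y' i)) y) volume := by
    intro k
    refine (Measurable.indicator ?_ (hTmeas k)).aemeasurable
    exact measurable_const.mul
      (Finset.measurable_prod _ fun i _ => (hgmeas i).comp (measurable_pi_apply i))
  have hHeq : ∀ (k : ℕ) (y : Fin m → EuclideanSpace ℝ (Fin n)),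
      (Set.univ.pi fun _ : Fin m => ball x (2^(k+1)*r)).indicator
        (fun y' => ENNReal.ofReal (A / (2^k * r)^(m*n)) * ∏ i, g i (y' i)) y
        = ENNReal.ofReal (A / (2^k * r)^(m*n)) *
            ∏ i, (ball x (2^(k+1)*r)).indicator (g i) (y i) := by
    intro k y
    by_cases hy : y ∈ Set.univ.pi fun _ : Fin m => ball x (2^(k+1)*r)
    · rw [Set.indicator_of_mem hy]
      congr 1
      exact Finset.prod_congr rfl fun i _ =>
        (Set.indicator_of_mem (hy i (Set.mem_univ i)) _).symm
    · rw [Set.indicator_of_notMem hy]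
      have h5 : ¬ ∀ i : Fin m, y i ∈ ball x (2^(k+1)*r) := fun hall => hy fun i _ => hall i
      push_neg at h5
      obtain ⟨i, hi⟩ := h5
      rw [Finset.prod_eq_zero (Finset.mem_univ i) (Set.indicator_of_notMem hi _), mul_zero]
  have hHint : ∀ k : ℕ,
      (∫⁻ y : Fin m → EuclideanSpace ℝ (Fin n),
        (Set.univ.pi fun _ : Fin m => ball x (2^(k+1)*r)).indicator
          (fun y' => ENNReal.ofReal (A / (2^k * r)^(m*n)) * ∏ i, g i (y' i)) y)
        = ENNReal.ofReal (A / (2^k * r)^(m*n)) *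
            ∏ i, ∫⁻ t in ball x (2^(k+1)*r), g i t := by
    intro k
    have hGmeas : ∀ i, Measurable ((ball x (2^(k+1)*r)).indicator (g i)) :=
      fun i => (hgmeas i).indicator measurableSet_ball
    calc (∫⁻ y : Fin m → EuclideanSpace ℝ (Fin n),
          (Set.univ.pi fun _ : Fin m => ball x (2^(k+1)*r)).indicator
            (fun y' => ENNReal.ofReal (A / (2^k * r)^(m*n)) * ∏ i, g i (y' i)) y)
        = ∫⁻ y : Fin m → EuclideanSpace ℝ (Fin n),
            ENNReal.ofReal (A / (2^k * r)^(m*n)) *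
              ∏ i, (ball x (2^(k+1)*r)).indicator (g i) (y i) :=
          lintegral_congr (hHeq k)
      _ = ENNReal.ofReal (A / (2^k * r)^(m*n)) *
            ∫⁻ y : Fin m → EuclideanSpace ℝ (Fin n),
              ∏ i, (ball x (2^(k+1)*r)).indicator (g i) (y i) :=
          lintegral_const_mul _
            (Finset.measurable_prod _ fun i _ => (hGmeas i).comp (measurable_pi_apply i))
      _ = ENNReal.ofReal (A / (2^k * r)^(m*n)) *
            ∏ i, ∫⁻ t, (ball x (2^(k+1)*r)).indicator (g i) t := by
          rw [my_lintegral_fin_prod _ hGmeas]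
      _ = ENNReal.ofReal (A / (2^k * r)^(m*n)) *
            ∏ i, ∫⁻ t in ball x (2^(k+1)*r), g i t := by
          congr 1
          exact Finset.prod_congr rfl fun i _ => lintegral_indicator measurableSet_ball _
  have hterm : ∀ k : ℕ,
      (∫⁻ y : Fin m → EuclideanSpace ℝ (Fin n),
        (Set.univ.pi fun _ : Fin m => ball x (2^(k+1)*r)).indicator
          (fun y' => ENNReal.ofReal (A / (2^k * r)^(m*n)) * ∏ i, g i (y' i)) y)
        ≤ (ENNReal.ofReal (A*4^(m*n)) * v1^m * ENNReal.ofReal (2*Cd^(1/p)) * (∏ i, N i)) *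
            (∫⁻ t in Set.Ioc ((2:ℝ)^(k+1)*r) (2^(k+2)*r), ENNReal.ofReal (φ z t ^ (1/p)/t)) := by
    intro k
    rw [hHint k]
    calc ENNReal.ofReal (A / (2^k * r)^(m*n)) * ∏ i, ∫⁻ t in ball x (2^(k+1)*r), g i t
        ≤ ENNReal.ofReal (A / (2^k * r)^(m*n)) *
            ((∏ i, N i) * ENNReal.ofReal (φ z (2^(k+1)*r + r) ^ (1/p)) *
              volume (ball z (2^(k+1)*r + r)) ^ m) := mul_le_mul_right (hprodfac k) _
      _ = (ENNReal.ofReal (A / (2^k * r)^(m*n)) * volume (ball z (2^(k+1)*r + r)) ^ m) *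
            ENNReal.ofReal (φ z (2^(k+1)*r + r) ^ (1/p)) * (∏ i, N i) := by ring
      _ ≤ (ENNReal.ofReal (A*4^(m*n)) * v1^m) *
            (ENNReal.ofReal (2*Cd^(1/p)) *
              ∫⁻ t in Set.Ioc ((2:ℝ)^(k+1)*r) (2^(k+2)*r), ENNReal.ofReal (φ z t ^ (1/p)/t)) *
            (∏ i, N i) := by
          exact mul_le_mul_left (mul_le_mul' (hconst k) (hphik k)) _
      _ = (ENNReal.ofReal (A*4^(m*n)) * v1^m * ENNReal.ofReal (2*Cd^(1/p)) * (∏ i, N i)) *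
            (∫⁻ t in Set.Ioc ((2:ℝ)^(k+1)*r) (2^(k+2)*r), ENNReal.ofReal (φ z t ^ (1/p)/t)) := by
          ring
  calc (∫⁻ y : Fin m → EuclideanSpace ℝ (Fin n),
        ENNReal.ofReal |K x y| *
          ∏ i, ENNReal.ofReal |((ball z (2 * r))ᶜ).indicator (f i) (y i)|)
      ≤ ∫⁻ y : Fin m → EuclideanSpace ℝ (Fin n),
          ∑' k : ℕ, (Set.univ.pi fun _ : Fin m => ball x (2^(k+1)*r)).indicator
            (fun y' => ENNReal.ofReal (A / (2^k * r)^(m*n)) * ∏ i, g i (y' i)) y :=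
        lintegral_mono hpt
    _ = ∑' k : ℕ, ∫⁻ y : Fin m → EuclideanSpace ℝ (Fin n),
          (Set.univ.pi fun _ : Fin m => ball x (2^(k+1)*r)).indicator
            (fun y' => ENNReal.ofReal (A / (2^k * r)^(m*n)) * ∏ i, g i (y' i)) y :=
        lintegral_tsum hHmeas
    _ ≤ ∑' k : ℕ, (ENNReal.ofReal (A*4^(m*n)) * v1^m * ENNReal.ofReal (2*Cd^(1/p)) *
          (∏ i, N i)) *
          (∫⁻ t in Set.Ioc ((2:ℝ)^(k+1)*r) (2^(k+2)*r), ENNReal.ofReal (φ z t ^ (1/p)/t)) :=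
        ENNReal.tsum_le_tsum hterm
    _ = (ENNReal.ofReal (A*4^(m*n)) * v1^m * ENNReal.ofReal (2*Cd^(1/p)) * (∏ i, N i)) *
          ∑' k : ℕ, ∫⁻ t in Set.Ioc ((2:ℝ)^(k+1)*r) (2^(k+2)*r),
            ENNReal.ofReal (φ z t ^ (1/p)/t) := ENNReal.tsum_mul_left
    _ ≤ (ENNReal.ofReal (A*4^(m*n)) * v1^m * ENNReal.ofReal (2*Cd^(1/p)) * (∏ i, N i)) *
          ∫⁻ t in Set.Ioi (2*r), ENNReal.ofReal (φ z t ^ (1/p) / t) :=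
        mul_le_mul_right hsumI _
    _ = ENNReal.ofReal (A * 4 ^ (m*n) * v1.toReal ^ m * (2 * Cd ^ (1/p))) *
          (∫⁻ t in Set.Ioi (2*r), ENNReal.ofReal (φ z t ^ (1/p) / t)) *
          ∏ i, morreyNorm n (pp i) (φi i) (f i) := by
        have hv1m : v1 ^ m = ENNReal.ofReal (v1.toReal ^ m) := by
          rw [ENNReal.ofReal_pow ENNReal.toReal_nonneg, ENNReal.ofReal_toReal hv1top]
        rw [hv1m, ← ENNReal.ofReal_mul (by positivity), ← ENNReal.ofReal_mul (by positivity)]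
        rw [hN]
        ring
end

section
/- Let 1 < p ≤ q < ∞, let φ ∈ 𝒢^dec satisfy the doubling condition and ∫_r^∞ φ(x,t)/t dt ≤ C φ(x,r) for all x ∈ ℝⁿ and r > 0, and let ψ : ℝⁿ×(0,∞) → (0,∞) satisfy ψ(x,r)φ(x,r)^{1/p} ≤ C₀ φ(x,r)^{1/q} for all x, r. Then there is a constant C' such that for all z ∈ ℝⁿ and r > 0: ∫_r^∞ (ψ(z,t)/t) ( ∫_t^∞ φ(z,u)^{1/p}/u du ) dt ≤ C' φ(z,r)^{1/q}. -/
set_option maxHeartbeats 1000000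

open MeasureTheory Metric ENNReal

lemma dyadic_decomp (f : ℝ → ℝ≥0∞) {s : ℝ} (hs : 0 < s) :
    ∫⁻ u in Set.Ioi s, f u = ∑' j : ℕ, ∫⁻ u in Set.Ioc (2^j * s) (2^(j+1) * s), f u := by
  have hset : Set.Ioi s = ⋃ j : ℕ, Set.Ioc (2^j * s) (2^(j+1) * s) := by
    ext x
    simp only [Set.mem_Ioi, Set.mem_iUnion, Set.mem_Ioc]
    constructor
    · intro hx
      have hP : ∃ j : ℕ, x ≤ 2^(j+1) * s := by
        obtain ⟨m, hm⟩ := exists_nat_gt (x / s)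
        refine ⟨m, ?_⟩
        have hms : x < m * s := (div_lt_iff₀ hs).1 hm
        have h2m : (m : ℝ) ≤ 2 ^ (m + 1) := by
          calc (m : ℝ) ≤ (2:ℝ)^m := by exact_mod_cast (Nat.lt_two_pow_self (n := m)).le
          _ ≤ 2^(m+1) := by
              apply pow_le_pow_right₀ (by norm_num) (by omega)
        nlinarith
      classical
      let j₀ := Nat.find hP
      refine ⟨j₀, ?_, Nat.find_spec hP⟩
      rcases Nat.eq_zero_or_pos j₀ with h0 | hpos
      · rw [h0]; simpa using hx
      · obtain ⟨m, hm⟩ := Nat.exists_eq_add_of_lt hpos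
        have h1 : ¬ (x ≤ 2^(m+1) * s) := Nat.find_min hP (by omega)
        push_neg at h1
        have h2 : (2:ℝ)^j₀ * s = 2^(m+1) * s := by rw [hm]; ring_nf
        linarith
    · rintro ⟨j, hj1, hj2⟩
      have : s ≤ 2^j * s := le_mul_of_one_le_left hs.le (one_le_pow₀ (by norm_num))
      linarith
  have key : ∀ i j : ℕ, i < j →
      Disjoint (Set.Ioc ((2:ℝ)^i*s) (2^(i+1)*s)) (Set.Ioc ((2:ℝ)^j*s) (2^(j+1)*s)) := by
    intro i j hij
    rw [Set.disjoint_left]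
    intro x hx hx'
    have h1 : x ≤ 2^(i+1) * s := hx.2
    have h2 : (2:ℝ)^j * s < x := hx'.1
    have : (2:ℝ)^(i+1) ≤ 2^j := pow_le_pow_right₀ (by norm_num) (by omega)
    nlinarith
  rw [hset, lintegral_iUnion (fun j => measurableSet_Ioc)]
  intro i j hij
  rcases hij.lt_or_gt with h | h
  · exact key i j h
  · exact (key j i h).symm

lemma geom_decay {α : Type*} (φ : α → ℝ → ℝ) (Cd C : ℝ) (hCd : 1 ≤ Cd) (hC : 0 < C)
    (hpos : ∀ z r, 0 < r → 0 < φ z r)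
    (hdec : ∀ z r s, 0 < r → r < s → φ z s ≤ Cd * φ z r)
    (hint : ∀ z (r : ℝ), 0 < r →
      ∫⁻ t in Set.Ioi r, ENNReal.ofReal (φ z t / t) ≤ ENNReal.ofReal (C * φ z r)) :
    ∀ z (r : ℝ), 0 < r → ∀ k : ℕ,
      φ z (2^k * r) ≤ (1 + 2*Cd*C) * (2*Cd*C/(2*Cd*C+1))^k * φ z r := by
  intro z r hr
  set M : ℝ := 2*Cd*C with hM
  have hM0 : 0 < M := by positivity
  have hpow : ∀ m : ℕ, (0:ℝ) < 2^m * r := fun m => by positivity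
  set b : ℕ → ℝ≥0∞ := fun m => ENNReal.ofReal (φ z (2^m * r)) with hb
  have hbm : ∀ m, b m = ENNReal.ofReal (φ z (2^m * r)) := fun m => rfl
  -- Step 1: tail sums
  have step1 : ∀ k : ℕ, ∑' j : ℕ, b (k+1+j) ≤ ENNReal.ofReal M * b k := by
    intro k
    have hs : (0:ℝ) < 2^k * r := hpow k
    have hdecomp := dyadic_decomp (fun u => ENNReal.ofReal (φ z u / u)) hs
    have hpiece : ∀ j : ℕ,
        ENNReal.ofReal ((2*Cd)⁻¹ * φ z (2^(k+1+j) * r)) ≤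
          ∫⁻ u in Set.Ioc ((2:ℝ)^j * (2^k*r)) (2^(j+1) * (2^k*r)),
            ENNReal.ofReal (φ z u / u) := by
      intro j
      set a1 : ℝ := (2:ℝ)^j * (2^k*r) with ha1
      set a2 : ℝ := (2:ℝ)^(j+1) * (2^k*r) with ha2
      have ha1p : 0 < a1 := by positivity
      have ha2p : 0 < a2 := by positivity
      have hφa2 : 0 < φ z a2 := hpos z a2 ha2p
      have heq : a2 = 2^(k+1+j) * r := by rw [ha2]; ring
      have hlow : ∀ u ∈ Set.Ioc a1 a2,
          ENNReal.ofReal (Cd⁻¹ * φ z a2 / a2) ≤ ENNReal.ofReal (φ z u / u) := by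
        intro u hu
        have hu0 : 0 < u := lt_trans ha1p hu.1
        apply ENNReal.ofReal_le_ofReal
        have hφu : Cd⁻¹ * φ z a2 ≤ φ z u := by
          rcases eq_or_lt_of_le hu.2 with he | hl
          · rw [he]
            rw [inv_mul_le_iff₀ (by linarith)]
            nlinarith
          · have := hdec z u a2 hu0 hl
            rw [inv_mul_le_iff₀ (by linarith)]
            linarith
        exact div_le_div₀ (hpos z u hu0).le hφu hu0 hu.2
      calc ENNReal.ofReal ((2*Cd)⁻¹ * φ z (2^(k+1+j) * r))
          = ENNReal.ofReal (Cd⁻¹ * φ z a2 / a2) * volume (Set.Ioc a1 a2) := by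
            rw [Real.volume_Ioc,
              ← ENNReal.ofReal_mul (by positivity), ← heq]
            congr 1
            have h21 : a2 - a1 = a1 := by rw [ha1, ha2]; ring
            rw [h21]
            field_simp [ha1, ha2]
            ring
        _ = ∫⁻ _ in Set.Ioc a1 a2, ENNReal.ofReal (Cd⁻¹ * φ z a2 / a2) := by
            rw [setLIntegral_const]
        _ ≤ _ := by
            apply lintegral_mono_ae
            filter_upwards [ae_restrict_mem measurableSet_Ioc] with u hu
            exact hlow u hu
    have hsum : ∑' j : ℕ, ENNReal.ofReal ((2*Cd)⁻¹ * φ z (2^(k+1+j) * r)) ≤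
        ENNReal.ofReal (C * φ z (2^k * r)) := by
      calc _ ≤ ∑' j : ℕ, ∫⁻ u in Set.Ioc ((2:ℝ)^j * (2^k*r)) (2^(j+1) * (2^k*r)),
              ENNReal.ofReal (φ z u / u) := ENNReal.tsum_le_tsum hpiece
        _ = ∫⁻ u in Set.Ioi ((2:ℝ)^k*r), ENNReal.ofReal (φ z u / u) := hdecomp.symm
        _ ≤ _ := hint z _ hs
    have h2Cd : (0:ℝ) < 2*Cd := by linarith
    calc ∑' j : ℕ, b (k+1+j)
        = ∑' j : ℕ, ENNReal.ofReal (2*Cd) *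
            ENNReal.ofReal ((2*Cd)⁻¹ * φ z (2^(k+1+j) * r)) := by
          apply tsum_congr; intro j
          rw [hbm, ← ENNReal.ofReal_mul h2Cd.le, ← mul_assoc,
            mul_inv_cancel₀ h2Cd.ne', one_mul]
      _ = ENNReal.ofReal (2*Cd) * ∑' j : ℕ, ENNReal.ofReal ((2*Cd)⁻¹ * φ z (2^(k+1+j) * r)) :=
          ENNReal.tsum_mul_left
      _ ≤ ENNReal.ofReal (2*Cd) * ENNReal.ofReal (C * φ z (2^k * r)) :=
          mul_le_mul_right hsum _
      _ = ENNReal.ofReal M * b k := by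
          rw [hbm, ← ENNReal.ofReal_mul h2Cd.le, ← ENNReal.ofReal_mul hM0.le]
          congr 1
          rw [hM]; ring
  -- tails
  set T : ℕ → ℝ≥0∞ := fun k => ∑' j : ℕ, b (k+j) with hT
  have hTrec : ∀ k, T k = b k + T (k+1) := by
    intro k
    show ∑' j : ℕ, b (k+j) = b k + ∑' j : ℕ, b (k+1+j)
    rw [tsum_eq_zero_add' (f := fun j : ℕ => b (k+j)) ENNReal.summable]
    simp only [add_zero]
    congr 1
    apply tsum_congr; intro j; congr 1; omega
  have hTtail : ∀ k, T (k+1) ≤ ENNReal.ofReal M * b k := by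
    intro k
    calc T (k+1) = ∑' j : ℕ, b (k+1+j) := by
          apply tsum_congr; intro j; congr 1
      _ ≤ _ := step1 k
  have hbk : ∀ k, b k ≤ T k := by
    intro k
    have h0 := ENNReal.le_tsum (f := fun j : ℕ => b (k+j)) 0
    simpa using h0
  set ρ : ℝ≥0∞ := ENNReal.ofReal M / ENNReal.ofReal (M+1) with hρ
  have hMne : ENNReal.ofReal (M+1) ≠ 0 := by
    simp only [ne_eq, ENNReal.ofReal_eq_zero, not_le]; linarith
  have hrec : ∀ k, T (k+1) ≤ ρ * T k := by
    intro k
    have h1 : ENNReal.ofReal (M+1) * T (k+1) ≤ ENNReal.ofReal M * T k := by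
      have he : ENNReal.ofReal (M+1) = ENNReal.ofReal M + 1 := by
        rw [ENNReal.ofReal_add hM0.le (by norm_num)]; simp
      rw [he, add_mul, one_mul, hTrec k, mul_add,
        add_comm (ENNReal.ofReal M * b k)]
      exact add_le_add le_rfl (hTtail k)
    have h2 : T (k+1) ≤ ENNReal.ofReal M * T k / ENNReal.ofReal (M+1) :=
      (ENNReal.le_div_iff_mul_le (Or.inl hMne) (Or.inl ENNReal.ofReal_ne_top)).2
        (by rwa [mul_comm])
    calc T (k+1) ≤ ENNReal.ofReal M * T k / ENNReal.ofReal (M+1) := h2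
      _ = ρ * T k := by
          rw [hρ, div_eq_mul_inv, div_eq_mul_inv]; ring
  have hiter : ∀ k, T k ≤ ρ^k * T 0 := by
    intro k
    induction k with
    | zero => simp
    | succ m ih =>
      calc T (m+1) ≤ ρ * T m := hrec m
        _ ≤ ρ * (ρ^m * T 0) := mul_le_mul_right ih _
        _ = ρ^(m+1) * T 0 := by ring
  have hT0 : T 0 ≤ ENNReal.ofReal (1 + M) * b 0 := by
    rw [hTrec 0]
    calc b 0 + T 1 ≤ b 0 + ENNReal.ofReal M * b 0 := add_le_add le_rfl (hTtail 0)
      _ = (1 + ENNReal.ofReal M) * b 0 := by ring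
      _ = ENNReal.ofReal (1+M) * b 0 := by
          rw [ENNReal.ofReal_add (by norm_num) hM0.le]; simp
  intro k
  have hρreal : ρ = ENNReal.ofReal (M/(M+1)) := by
    rw [hρ, ENNReal.ofReal_div_of_pos (by linarith)]
  have hb0 : b 0 = ENNReal.ofReal (φ z r) := by rw [hbm]; norm_num
  have hMM : (0:ℝ) ≤ M/(M+1) := div_nonneg hM0.le (by linarith)
  have hfinal : ENNReal.ofReal (φ z (2^k * r)) ≤
      ENNReal.ofReal ((1 + M) * (M/(M+1))^k * φ z r) := by
    calc ENNReal.ofReal (φ z (2^k * r)) = b k := (hbm k).symm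
      _ ≤ T k := hbk k
      _ ≤ ρ^k * T 0 := hiter k
      _ ≤ ρ^k * (ENNReal.ofReal (1 + M) * b 0) := mul_le_mul_right hT0 _
      _ = ENNReal.ofReal ((M/(M+1))^k) * (ENNReal.ofReal (1 + M) * ENNReal.ofReal (φ z r)) := by
          rw [hρreal, ← ENNReal.ofReal_pow hMM, hb0]
      _ = ENNReal.ofReal ((1 + M) * (M/(M+1))^k * φ z r) := by
          rw [← ENNReal.ofReal_mul (by linarith : (0:ℝ) ≤ 1+M),
            ← ENNReal.ofReal_mul (pow_nonneg hMM k)]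
          congr 1; ring
  rw [ENNReal.ofReal_le_ofReal_iff
    (mul_nonneg (mul_nonneg (by linarith) (pow_nonneg hMM k)) (hpos z r hr).le)] at hfinal
  calc φ z (2^k * r) ≤ (1 + M) * (M/(M+1))^k * φ z r := hfinal
    _ = (1 + 2*Cd*C) * (2*Cd*C/(2*Cd*C+1))^k * φ z r := by rw [hM]

lemma tail_int {α : Type*} (φ : α → ℝ → ℝ) (Cd A ρ θ : ℝ) (hCd : 1 ≤ Cd) (hA : 0 < A)
    (hρ0 : 0 < ρ) (hρ1 : ρ < 1) (hθ : 0 < θ)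
    (hpos : ∀ z r, 0 < r → 0 < φ z r)
    (hdec : ∀ z r s, 0 < r → r < s → φ z s ≤ Cd * φ z r)
    (hdecay : ∀ z (r : ℝ), 0 < r → ∀ k : ℕ, φ z (2^k * r) ≤ A * ρ^k * φ z r) :
    ∃ K > 0, ∀ z (t : ℝ), 0 < t →
      ∫⁻ u in Set.Ioi t, ENNReal.ofReal (φ z u ^ θ / u) ≤
        ENNReal.ofReal (K * φ z t ^ θ) := by
  have hρθ : ρ ^ θ < 1 := Real.rpow_lt_one hρ0.le hρ1 hθ
  have hρθ0 : 0 < ρ ^ θ := Real.rpow_pos_of_pos hρ0 θ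
  have hK : 0 < (Cd*A)^θ * (1 - ρ^θ)⁻¹ :=
    mul_pos (Real.rpow_pos_of_pos (mul_pos (by linarith) hA) θ) (inv_pos.2 (by linarith))
  refine ⟨(Cd*A)^θ * (1 - ρ^θ)⁻¹, hK, ?_⟩
  intro z t ht
  rw [dyadic_decomp _ ht]
  have hpiece : ∀ j : ℕ,
      ∫⁻ u in Set.Ioc ((2:ℝ)^j * t) (2^(j+1) * t), ENNReal.ofReal (φ z u ^ θ / u) ≤
        ENNReal.ofReal ((Cd*A)^θ * φ z t ^ θ * (ρ^θ)^j) := by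
    intro j
    set a1 : ℝ := (2:ℝ)^j * t with ha1
    set a2 : ℝ := (2:ℝ)^(j+1) * t with ha2
    have ha1p : 0 < a1 := by positivity
    have ha2p : 0 < a2 := by positivity
    have hφ1 : 0 < φ z a1 := hpos z a1 ha1p
    have hbound : ∀ u ∈ Set.Ioc a1 a2,
        ENNReal.ofReal (φ z u ^ θ / u) ≤ ENNReal.ofReal ((Cd * φ z a1)^θ / a1) := by
      intro u hu
      have hu0 : 0 < u := lt_trans ha1p hu.1
      apply ENNReal.ofReal_le_ofReal
      have h1 : φ z u ≤ Cd * φ z a1 := hdec z a1 u ha1p hu.1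
      have h2 : φ z u ^ θ ≤ (Cd * φ z a1)^θ :=
        Real.rpow_le_rpow (hpos z u hu0).le h1 hθ.le
      exact div_le_div₀ (Real.rpow_nonneg (by positivity) θ) h2 ha1p hu.1.le
    calc ∫⁻ u in Set.Ioc a1 a2, ENNReal.ofReal (φ z u ^ θ / u)
        ≤ ∫⁻ _ in Set.Ioc a1 a2, ENNReal.ofReal ((Cd * φ z a1)^θ / a1) := by
          apply lintegral_mono_ae
          filter_upwards [ae_restrict_mem measurableSet_Ioc] with u hu
          exact hbound u hu
      _ = ENNReal.ofReal ((Cd * φ z a1)^θ / a1) * volume (Set.Ioc a1 a2) := by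
          rw [setLIntegral_const]
      _ = ENNReal.ofReal ((Cd * φ z a1)^θ) := by
          rw [Real.volume_Ioc, ← ENNReal.ofReal_mul (by positivity)]
          congr 1
          have h21 : a2 - a1 = a1 := by rw [ha1, ha2]; ring
          rw [h21, div_mul_cancel₀]
          exact ha1p.ne'
      _ ≤ ENNReal.ofReal ((Cd*A)^θ * φ z t ^ θ * (ρ^θ)^j) := by
          apply ENNReal.ofReal_le_ofReal
          have hd : φ z a1 ≤ A * ρ^j * φ z t := hdecay z t ht j
          have h1 : Cd * φ z a1 ≤ Cd * A * ρ^j * φ z t := by nlinarith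
          have h2 : (Cd * φ z a1)^θ ≤ (Cd * A * ρ^j * φ z t)^θ :=
            Real.rpow_le_rpow (by positivity) h1 hθ.le
          have h3 : (Cd * A * ρ^j * φ z t)^θ = (Cd*A)^θ * φ z t ^ θ * (ρ^θ)^j := by
            have hjθ : ((ρ^j : ℝ))^θ = (ρ^θ)^j := by
              rw [← Real.rpow_natCast ρ j, ← Real.rpow_mul hρ0.le, mul_comm,
                Real.rpow_mul hρ0.le, Real.rpow_natCast]
            rw [show Cd * A * ρ^j * φ z t = (Cd*A) * ρ^j * φ z t by ring,
              Real.mul_rpow (by positivity) (hpos z t ht).le,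
              Real.mul_rpow (by positivity) (by positivity), hjθ]
            ring
          linarith
  calc ∑' j : ℕ, ∫⁻ u in Set.Ioc ((2:ℝ)^j * t) (2^(j+1) * t), ENNReal.ofReal (φ z u ^ θ / u)
      ≤ ∑' j : ℕ, ENNReal.ofReal ((Cd*A)^θ * φ z t ^ θ * (ρ^θ)^j) :=
        ENNReal.tsum_le_tsum hpiece
    _ = ENNReal.ofReal (∑' j : ℕ, (Cd*A)^θ * φ z t ^ θ * (ρ^θ)^j) := by
        rw [ENNReal.ofReal_tsum_of_nonneg]
        · intro j
          have := hpos z t ht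
          positivity
        · exact (summable_geometric_of_lt_one hρθ0.le hρθ).mul_left _
    _ = ENNReal.ofReal ((Cd*A)^θ * (1 - ρ^θ)⁻¹ * φ z t ^ θ) := by
        congr 1
        rw [tsum_mul_left, tsum_geometric_of_lt_one hρθ0.le hρθ]
        ring

/-- `φ ∈ 𝒢^dec`. -/
def Gdec (n : ℕ) (φ : EuclideanSpace ℝ (Fin n) → ℝ → ℝ) : Prop :=
  ∃ C > (0 : ℝ), ∀ x (r s : ℝ), 0 < r → r < s →
    φ x s ≤ C * φ x r ∧ φ x r * r ^ (n : ℝ) ≤ C * (φ x s * s ^ (n : ℝ))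

/-- under `ψ(x,r)φ(x,r)^{1/p} ≤ C₀φ(x,r)^{1/q}` and the decay and
integral conditions on `φ`, one has
`∫_r^∞ (ψ(z,t)/t)(∫_t^∞ φ(z,u)^{1/p}/u du) dt ≤ C' φ(z,r)^{1/q}`. -/
theorem iterated_integral_bound (n : ℕ) (p q : ℝ) (hp : 1 < p) (hpq : p ≤ q)
    (φ ψ : EuclideanSpace ℝ (Fin n) → ℝ → ℝ)
    (hφpos : ∀ x r, 0 < r → 0 < φ x r)
    (hψpos : ∀ x r, 0 < r → 0 < ψ x r)
    (hφdec : Gdec n φ) (hφdoub : DoublingCond n φ)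
    (C : ℝ) (hC : 0 < C)
    (hint : ∀ x (r : ℝ), 0 < r →
      ∫⁻ t in Set.Ioi r, ENNReal.ofReal (φ x t / t) ≤ ENNReal.ofReal (C * φ x r))
    (C₀ : ℝ) (hC₀ : 0 < C₀)
    (hψφ : ∀ x (r : ℝ), 0 < r → ψ x r * φ x r ^ (1 / p) ≤ C₀ * φ x r ^ (1 / q)) :
    ∃ C' : ℝ, 0 < C' ∧ ∀ z (r : ℝ), 0 < r →
      (∫⁻ t in Set.Ioi r, ENNReal.ofReal (ψ z t / t) *
          ∫⁻ u in Set.Ioi t, ENNReal.ofReal (φ z u ^ (1 / p) / u))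
        ≤ ENNReal.ofReal (C' * φ z r ^ (1 / q)) := by
  obtain ⟨Cg, hCg, hGdec⟩ := hφdec
  set Cd : ℝ := max Cg 1 with hCdd
  have hCd : 1 ≤ Cd := le_max_right _ _
  have hdec : ∀ z (r s : ℝ), 0 < r → r < s → φ z s ≤ Cd * φ z r := by
    intro z r s hr hrs
    exact le_trans (hGdec z r s hr hrs).1
      (mul_le_mul_of_nonneg_right (le_max_left _ _) (hφpos z r hr).le)
  have hdecay := geom_decay φ Cd C hCd hC hφpos hdec hint
  set A : ℝ := 1 + 2*Cd*C with hA'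
  set ρ : ℝ := 2*Cd*C/(2*Cd*C+1) with hρ'
  have hA : 0 < A := by rw [hA']; positivity
  have hρ0 : 0 < ρ := by rw [hρ']; positivity
  have hρ1 : ρ < 1 := by
    rw [hρ', div_lt_one (by positivity)]; linarith
  have hq : 1 < q := lt_of_lt_of_le hp hpq
  obtain ⟨K₁, hK₁0, hK₁⟩ := tail_int φ Cd A ρ (1/p) hCd hA hρ0 hρ1
    (one_div_pos.2 (by linarith)) hφpos hdec hdecay
  obtain ⟨K₂, hK₂0, hK₂⟩ := tail_int φ Cd A ρ (1/q) hCd hA hρ0 hρ1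
    (one_div_pos.2 (by linarith)) hφpos hdec hdecay
  refine ⟨K₁ * C₀ * K₂, by positivity, ?_⟩
  intro z r hr
  calc (∫⁻ t in Set.Ioi r, ENNReal.ofReal (ψ z t / t) *
          ∫⁻ u in Set.Ioi t, ENNReal.ofReal (φ z u ^ (1 / p) / u))
      ≤ ∫⁻ t in Set.Ioi r, ENNReal.ofReal (K₁ * C₀) *
          ENNReal.ofReal (φ z t ^ (1/q) / t) := by
        apply lintegral_mono_ae
        filter_upwards [ae_restrict_mem measurableSet_Ioi] with t ht
        have ht0 : 0 < t := hr.trans ht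
        have hψt : (0:ℝ) ≤ ψ z t / t := div_nonneg (hψpos z t ht0).le ht0.le
        calc ENNReal.ofReal (ψ z t / t) *
              ∫⁻ u in Set.Ioi t, ENNReal.ofReal (φ z u ^ (1 / p) / u)
            ≤ ENNReal.ofReal (ψ z t / t) * ENNReal.ofReal (K₁ * φ z t ^ (1/p)) :=
              mul_le_mul_right (hK₁ z t ht0) _
          _ = ENNReal.ofReal (ψ z t / t * (K₁ * φ z t ^ (1/p))) :=
              (ENNReal.ofReal_mul hψt).symm
          _ ≤ ENNReal.ofReal (K₁ * C₀ * (φ z t ^ (1/q) / t)) := by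
              apply ENNReal.ofReal_le_ofReal
              have h := hψφ z t ht0
              have he : ψ z t / t * (K₁ * φ z t ^ (1/p)) =
                  K₁ / t * (ψ z t * φ z t ^ (1/p)) := by ring
              rw [he]
              calc K₁ / t * (ψ z t * φ z t ^ (1/p))
                  ≤ K₁ / t * (C₀ * φ z t ^ (1/q)) :=
                    mul_le_mul_of_nonneg_left h (div_nonneg hK₁0.le ht0.le)
                _ = K₁ * C₀ * (φ z t ^ (1/q) / t) := by ring
          _ = ENNReal.ofReal (K₁ * C₀) * ENNReal.ofReal (φ z t ^ (1/q) / t) :=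
              ENNReal.ofReal_mul (mul_nonneg hK₁0.le hC₀.le)
    _ = ENNReal.ofReal (K₁ * C₀) *
          ∫⁻ t in Set.Ioi r, ENNReal.ofReal (φ z t ^ (1/q) / t) :=
        lintegral_const_mul' _ _ ENNReal.ofReal_ne_top
    _ ≤ ENNReal.ofReal (K₁ * C₀) * ENNReal.ofReal (K₂ * φ z r ^ (1/q)) :=
        mul_le_mul_right (hK₂ z r hr) _
    _ = ENNReal.ofReal (K₁ * C₀ * K₂ * φ z r ^ (1/q)) := by
        rw [← ENNReal.ofReal_mul (mul_nonneg hK₁0.le hC₀.le)]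
        congr 1; ring
end
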